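/- arXiv:2312.05088 — 4 statements merged into one kernel-verified Lean document; each statement's English description precedes it below -/
import Mathlib

section
/- Let p, q : ℝⁿ → [1,∞] be measurable exponents. Suppose {(f_j^n)_{j∈ℕ₀}}_{n∈ℕ₀} is a sequence of elements of the mixed Lebesgue-sequence space ℓ^{q(·)}(L^{p(·)}) with |f_j^n| ≤ |f_j^{n+1}| pointwise for all j, n, and f_j^n(x) → f_j(x) for all j and x. Then sup_n ‖(f_j^n)_j‖_{ℓ^{q(·)}(L^{p(·)})} = ‖(f_j)_j‖_{ℓ^{q(·)}(L^{p(·)})}. -/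
open MeasureTheory ENNReal Filter
open scoped SchwartzMap FourierTransform

noncomputable section

/-- Euclidean space ℝⁿ. -/
abbrev En (n : ℕ) := EuclideanSpace ℝ (Fin n)

/-- `ω_p(t)`: `t^p` for finite `p`; for `p = ∞` it is `0` if `t ≤ 1` and `∞` otherwise. -/
def omegaP (p t : ℝ≥0∞) : ℝ≥0∞ :=
  if p = ∞ then (if t ≤ 1 then 0 else ∞) else t ^ p.toReal

/-- Variable exponent modular `ρ_{p(·)}` on nonnegative (ℝ≥0∞-valued) functions. -/
def rhoP {n : ℕ} (p : En n → ℝ≥0∞) (F : En n → ℝ≥0∞) : ℝ≥0∞ :=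
  ∫⁻ x, omegaP (p x) (F x)

/-- Luxemburg norm for the variable exponent Lebesgue space. -/
def luxNorm {n : ℕ} (p : En n → ℝ≥0∞) (F : En n → ℝ≥0∞) : ℝ≥0∞ :=
  sInf {l : ℝ≥0∞ | 0 < l ∧ rhoP p (fun x => F x / l) ≤ 1}

/-- The nonnegative absolute value of a real function, as an ℝ≥0∞-valued function. -/
def nnAbs {n : ℕ} (f : En n → ℝ) : En n → ℝ≥0∞ := fun x => ENNReal.ofReal |f x|

/-- Modular of the mixed Lebesgue-sequence space `ℓ^{q(·)}(L^{p(·)})`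
(convention `λ^{1/∞} = λ^0 = 1`). -/
def mixedModular {n : ℕ} (q p : En n → ℝ≥0∞) (F : ℕ → En n → ℝ≥0∞) : ℝ≥0∞ :=
  ∑' j, sInf {l : ℝ≥0∞ | 0 < l ∧ rhoP p (fun x => F j x / l ^ ((q x)⁻¹).toReal) ≤ 1}

/-- Quasi-norm of the mixed Lebesgue-sequence space `ℓ^{q(·)}(L^{p(·)})`. -/
def mixedNorm {n : ℕ} (q p : En n → ℝ≥0∞) (F : ℕ → En n → ℝ≥0∞) : ℝ≥0∞ :=
  sInf {m : ℝ≥0∞ | 0 < m ∧ mixedModular q p (fun j x => F j x / m) ≤ 1}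

/-- `g` is locally log-Hölder continuous with constant `c`. -/
def LocLogHolder {n : ℕ} (c : ℝ) (g : En n → ℝ) : Prop :=
  0 < c ∧ ∀ x y : En n, |g x - g y| ≤ c / Real.log (Real.exp 1 + 1 / ‖x - y‖)

/-- `g ∈ C^log_loc(ℝⁿ)`. -/
def ClogLoc {n : ℕ} (g : En n → ℝ) : Prop := ∃ c, LocLogHolder c g

/-- `g` is globally log-Hölder continuous: locally log-Hölder plus the log-Hölder
decay condition at infinity. -/
def GlobLogHolder {n : ℕ} (g : En n → ℝ) : Prop :=
  ClogLoc g ∧ ∃ c g_inf : ℝ, 0 < c ∧ ∀ x : En n, |g x - g_inf| ≤ c / Real.log (Real.exp 1 + ‖x‖)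

/-- A measurable variable exponent `p : ℝⁿ → [1,∞]`. -/
def IsExponent {n : ℕ} (p : En n → ℝ≥0∞) : Prop := Measurable p ∧ ∀ x, 1 ≤ p x

/-- `p ∈ 𝒫^log(ℝⁿ)`: a variable exponent with `1/p` globally log-Hölder continuous. -/
def Plog {n : ℕ} (p : En n → ℝ≥0∞) : Prop :=
  IsExponent p ∧ GlobLogHolder (fun x => ((p x)⁻¹).toReal)

/-- Convolution of two real functions. -/
def conv {n : ℕ} (φ f : En n → ℝ) (x : En n) : ℝ := ∫ y, φ (x - y) * f y

/-- Partial derivative in the `k`-th coordinate direction. -/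
def pderiv {n : ℕ} (k : Fin n) (f : En n → ℝ) (x : En n) : ℝ :=
  fderiv ℝ f x (EuclideanSpace.single k 1)

/-- Besov quasi-norm with variable smoothness and integrability, relative to a
system `(φ_j)_j`. -/
def besovNorm {n : ℕ} (φ : ℕ → En n → ℝ) (s : En n → ℝ) (q p : En n → ℝ≥0∞)
    (g : En n → ℝ) : ℝ≥0∞ :=
  mixedNorm q p (fun j x => ENNReal.ofReal ((2:ℝ) ^ ((j:ℝ) * s x) * |conv (φ j) g x|))

/-- A smooth dyadic resolution of unity `(ℱφ_j)_j`. -/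
structure DyadicResolution (n : ℕ) where
  φ : ℕ → 𝓢(En n, ℝ)
  supp_zero : ∀ ξ : En n, 2 < ‖ξ‖ → 𝓕 (fun y => (φ 0 y : ℂ)) ξ = 0
  supp_pos : ∀ j : ℕ, 0 < j → ∀ ξ : En n,
      (‖ξ‖ < (2:ℝ) ^ ((j:ℤ) - 1) ∨ (2:ℝ) ^ ((j:ℤ) + 1) < ‖ξ‖) →
      𝓕 (fun y => (φ j y : ℂ)) ξ = 0
  sum_one : ∀ ξ : En n, ∑' j, 𝓕 (fun y => (φ j y : ℂ)) ξ = 1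

/-- The commutator `[V·∇, Δ_j]f` relative to a convolution kernel `φj`. -/
def commVf {n : ℕ} (φj : En n → ℝ) (V : Fin n → En n → ℝ) (f : En n → ℝ)
    (x : En n) : ℝ :=
  ∑ k, (V k x * pderiv k (conv φj f) x - conv φj (fun y => V k y * pderiv k f y) x)

end

section Stmt2Aux

lemma omegaP_mono (pe : ℝ≥0∞) : Monotone (omegaP pe) := by
  intro a b hab
  unfold omegaP
  by_cases h : pe = ∞
  · simp only [if_pos h]
    by_cases hb : b ≤ 1
    · rw [if_pos (hab.trans hb), if_pos hb]
    · simp [hb]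
  · simp only [if_neg h]
    exact ENNReal.rpow_le_rpow hab ENNReal.toReal_nonneg

lemma omegaP_iSup {pe : ℝ≥0∞} (hpe : 1 ≤ pe) (t : ℕ → ℝ≥0∞) (ht : Monotone t) :
    omegaP pe (⨆ m, t m) = ⨆ m, omegaP pe (t m) := by
  unfold omegaP
  by_cases h : pe = ∞
  · simp only [if_pos h]
    by_cases hs : (⨆ m, t m) ≤ 1
    · rw [if_pos hs]
      have h1 : ∀ m, t m ≤ 1 := fun m => (le_iSup t m).trans hs
      simp [h1]
    · rw [if_neg hs]
      push_neg at hs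
      obtain ⟨m, hm⟩ := lt_iSup_iff.mp hs
      symm
      refine top_unique (le_iSup_of_le m ?_)
      rw [if_neg (not_le.mpr hm)]
  · simp only [if_neg h]
    have hc : 0 < pe.toReal :=
      ENNReal.toReal_pos (by rintro rfl; simp at hpe) h
    have h2 := (ENNReal.orderIsoRpow pe.toReal hc).map_iSup t
    simp only [ENNReal.orderIsoRpow_apply] at h2
    exact h2

lemma measurable_omegaP {n : ℕ} {p : En n → ℝ≥0∞} (hp : Measurable p)
    {u : En n → ℝ≥0∞} (hu : Measurable u) :
    Measurable fun x => omegaP (p x) (u x) := by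
  unfold omegaP
  apply Measurable.ite (hp (measurableSet_singleton ∞))
  · exact Measurable.ite (measurableSet_le hu measurable_const)
      measurable_const measurable_const
  · exact hu.pow hp.ennreal_toReal

lemma rhoP_mono {n : ℕ} (p : En n → ℝ≥0∞) {F G : En n → ℝ≥0∞} (h : ∀ x, F x ≤ G x) :
    rhoP p F ≤ rhoP p G :=
  lintegral_mono fun x => omegaP_mono _ (h x)

/-- The inner Luxemburg-type quantity in the mixed modular. -/
noncomputable def nuAux {n : ℕ} (q p : En n → ℝ≥0∞) (F : En n → ℝ≥0∞) : ℝ≥0∞ :=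
  sInf {l : ℝ≥0∞ | 0 < l ∧ rhoP p (fun x => F x / l ^ ((q x)⁻¹).toReal) ≤ 1}

lemma mixedModular_eq_nuAux {n : ℕ} (q p : En n → ℝ≥0∞) (F : ℕ → En n → ℝ≥0∞) :
    mixedModular q p F = ∑' j, nuAux q p (F j) := rfl

lemma nuAux_mono {n : ℕ} (q p : En n → ℝ≥0∞) {F G : En n → ℝ≥0∞}
    (h : ∀ x, F x ≤ G x) : nuAux q p F ≤ nuAux q p G := by
  apply sInf_le_sInf
  rintro l ⟨hl, hrho⟩
  exact ⟨hl, le_trans (rhoP_mono p fun x => ENNReal.div_le_div_right (h x) _) hrho⟩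

lemma nuAux_iSup {n : ℕ} {q p : En n → ℝ≥0∞} (hp : IsExponent p) (hq : Measurable q)
    {H : ℕ → En n → ℝ≥0∞} (hmeas : ∀ m, Measurable (H m))
    (hmono : ∀ m x, H m x ≤ H (m + 1) x) :
    nuAux q p (fun x => ⨆ m, H m x) = ⨆ m, nuAux q p (H m) := by
  have hmono' : ∀ x, Monotone fun m => H m x := fun x =>
    monotone_nat_of_le_succ fun m => hmono m x
  refine le_antisymm ?_ (iSup_le fun m => nuAux_mono q p fun x => le_iSup (fun m => H m x) m)
  refine le_of_forall_gt_imp_ge_of_dense fun l hl => ?_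
  have hl0 : 0 < l := lt_of_le_of_lt (zero_le) hl
  refine sInf_le ⟨hl0, ?_⟩
  have key : ∀ m, rhoP p (fun x => H m x / l ^ ((q x)⁻¹).toReal) ≤ 1 := by
    intro m
    have h1 : nuAux q p (H m) < l := lt_of_le_of_lt (le_iSup (fun m => nuAux q p (H m)) m) hl
    obtain ⟨a, ⟨ha0, harho⟩, hal⟩ := sInf_lt_iff.mp h1
    refine le_trans (rhoP_mono p fun x => ?_) harho
    exact ENNReal.div_le_div_left (ENNReal.rpow_le_rpow hal.le ENNReal.toReal_nonneg) _
  have heq : rhoP p (fun x => (⨆ m, H m x) / l ^ ((q x)⁻¹).toReal)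
      = ⨆ m, rhoP p (fun x => H m x / l ^ ((q x)⁻¹).toReal) := by
    unfold rhoP
    calc ∫⁻ x, omegaP (p x) ((⨆ m, H m x) / l ^ ((q x)⁻¹).toReal)
        = ∫⁻ x, ⨆ m, omegaP (p x) (H m x / l ^ ((q x)⁻¹).toReal) := by
          refine lintegral_congr fun x => ?_
          rw [ENNReal.iSup_div]
          exact omegaP_iSup (hp.2 x) _
            (fun a b hab => ENNReal.div_le_div_right (hmono' x hab) _)
      _ = ⨆ m, ∫⁻ x, omegaP (p x) (H m x / l ^ ((q x)⁻¹).toReal) := by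
          refine lintegral_iSup (fun m => measurable_omegaP hp.1
            ((hmeas m).div (measurable_const.pow hq.inv.ennreal_toReal))) ?_
          exact fun a b hab x =>
            omegaP_mono _ (ENNReal.div_le_div_right (hmono' x hab) _)
  rw [heq]
  exact iSup_le key

lemma tsum_iSup_of_monotone' {a : ℕ → ℕ → ℝ≥0∞} (h : ∀ j, Monotone fun m => a m j) :
    ∑' j, ⨆ m, a m j = ⨆ m, ∑' j, a m j := by
  refine le_antisymm ?_ (iSup_le fun m => ENNReal.tsum_le_tsum fun j => le_iSup (fun m => a m j) m)
  rw [ENNReal.tsum_eq_iSup_sum]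
  refine iSup_le fun s => ?_
  rw [ENNReal.finsetSum_iSup_of_monotone fun j => h j]
  exact iSup_mono fun m => ENNReal.sum_le_tsum s

lemma mixedModular_mono {n : ℕ} (q p : En n → ℝ≥0∞) {F G : ℕ → En n → ℝ≥0∞}
    (h : ∀ j x, F j x ≤ G j x) : mixedModular q p F ≤ mixedModular q p G := by
  rw [mixedModular_eq_nuAux, mixedModular_eq_nuAux]
  exact ENNReal.tsum_le_tsum fun j => nuAux_mono q p (h j)

lemma mixedModular_iSup {n : ℕ} {q p : En n → ℝ≥0∞} (hp : IsExponent p) (hq : Measurable q)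
    {H : ℕ → ℕ → En n → ℝ≥0∞} (hmeas : ∀ m j, Measurable (H m j))
    (hmono : ∀ m j x, H m j x ≤ H (m + 1) j x) :
    mixedModular q p (fun j x => ⨆ m, H m j x) = ⨆ m, mixedModular q p (H m) := by
  simp only [mixedModular_eq_nuAux]
  rw [← tsum_iSup_of_monotone' (fun j => monotone_nat_of_le_succ fun m =>
    nuAux_mono q p fun x => hmono m j x)]
  exact tsum_congr fun j => nuAux_iSup hp hq (fun m => hmeas m j) (fun m x => hmono m j x)

lemma mixedNorm_mono {n : ℕ} (q p : En n → ℝ≥0∞) {F G : ℕ → En n → ℝ≥0∞}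
    (h : ∀ j x, F j x ≤ G j x) : mixedNorm q p F ≤ mixedNorm q p G := by
  apply sInf_le_sInf
  rintro m ⟨hm, hmod⟩
  exact ⟨hm, le_trans (mixedModular_mono q p fun j x =>
    ENNReal.div_le_div_right (h j x) _) hmod⟩

end Stmt2Aux

/-- monotone convergence for the mixed Lebesgue-sequence quasi-norm. -/
theorem stmt2 {n : ℕ} (p q : En n → ℝ≥0∞) (hp : IsExponent p) (hq : IsExponent q)
    (f : ℕ → ℕ → En n → ℝ) (g : ℕ → En n → ℝ)
    (hfm : ∀ m j, Measurable (f m j)) (hgm : ∀ j, Measurable (g j))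
    (hmem : ∀ m, mixedNorm q p (fun j => nnAbs (f m j)) ≠ ∞)
    (hmono : ∀ m j x, |f m j x| ≤ |f (m + 1) j x|)
    (hlim : ∀ j x, Filter.Tendsto (fun m => f m j x) Filter.atTop (nhds (g j x))) :
    (⨆ m, mixedNorm q p (fun j => nnAbs (f m j))) = mixedNorm q p (fun j => nnAbs (g j)) := by
  have hptsup : ∀ j x, (⨆ m, nnAbs (f m j) x) = nnAbs (g j) x := by
    intro j x
    simp only [nnAbs]
    have hmr : Monotone fun m => |f m j x| := monotone_nat_of_le_succ fun m => hmono m j x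
    have hmono2 : Monotone fun m => ENNReal.ofReal |f m j x| :=
      fun a b hab => ENNReal.ofReal_le_ofReal (hmr hab)
    have h1 : Tendsto (fun m => ENNReal.ofReal |f m j x|) atTop
        (nhds (ENNReal.ofReal |g j x|)) :=
      (ENNReal.continuous_ofReal.tendsto _).comp ((hlim j x).abs)
    exact tendsto_nhds_unique (tendsto_atTop_iSup hmono2) h1
  have hFmono : ∀ m j x, nnAbs (f m j) x ≤ nnAbs (f (m + 1) j) x :=
    fun m j x => ENNReal.ofReal_le_ofReal (hmono m j x)
  refine le_antisymm (iSup_le fun m => mixedNorm_mono q p fun j x => ?_) ?_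
  · rw [← hptsup j x]
    exact le_iSup (fun m => nnAbs (f m j) x) m
  refine le_of_forall_gt_imp_ge_of_dense fun μ hμ => ?_
  have hμ0 : 0 < μ := lt_of_le_of_lt (zero_le) hμ
  refine sInf_le ⟨hμ0, ?_⟩
  have key : ∀ m, mixedModular q p (fun j x => nnAbs (f m j) x / μ) ≤ 1 := by
    intro m
    have h1 : mixedNorm q p (fun j => nnAbs (f m j)) < μ :=
      lt_of_le_of_lt (le_iSup (fun m => mixedNorm q p (fun j => nnAbs (f m j))) m) hμ
    obtain ⟨a, ⟨ha0, hamod⟩, haμ⟩ := sInf_lt_iff.mp h1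
    exact le_trans (mixedModular_mono q p fun j x =>
      ENNReal.div_le_div_left haμ.le _) hamod
  have heq : (fun j x => nnAbs (g j) x / μ)
      = fun j x => ⨆ m, nnAbs (f m j) x / μ := by
    funext j x
    rw [← hptsup j x, ENNReal.iSup_div]
  rw [heq, mixedModular_iSup (H := fun m j x => nnAbs (f m j) x / μ) hp hq.1
    (fun m j => ((hfm m j).abs.ennreal_ofReal).div measurable_const)
    (fun m j x => ENNReal.div_le_div_right (hFmono m j x) _)]
  exact iSup_le key
end

section
/- Let p, q : ℝⁿ → [1,∞] be measurable exponents with p⁺ < ∞ and q⁺ < ∞. Then for every (f_j)_{j∈ℕ₀} ∈ ℓ^{q(·)}(L^{p(·)}), the function μ ↦ ρ_{ℓ^{q(·)}(L^{p(·)})}((f_j/μ)_j) is continuous on (0,∞). -/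
open MeasureTheory ENNReal Filter
open scoped SchwartzMap FourierTransform

section Aux

open MeasureTheory ENNReal Filter Topology

lemma omegaP_mono_s4 {pp s t : ℝ≥0∞} (h : s ≤ t) : omegaP pp s ≤ omegaP pp t := by
  unfold omegaP
  by_cases hp : pp = ∞
  · simp only [hp, if_true]
    by_cases ht : t ≤ 1
    · rw [if_pos (h.trans ht), if_pos ht]
    · simp [ht]
  · simp only [hp, if_neg hp]
    exact ENNReal.rpow_le_rpow h ENNReal.toReal_nonneg

lemma ennreal_div_div (x : ℝ≥0∞) {u : ℝ≥0∞} (hu : u ≠ 0) (hu' : u ≠ ∞) (v : ℝ≥0∞) :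
    x / u / v = x / (u * v) := by
  rw [div_eq_mul_inv, div_eq_mul_inv, div_eq_mul_inv,
    ENNReal.mul_inv (Or.inl hu) (Or.inl hu'), mul_assoc]

lemma inner_mono {n : ℕ} (p q : En n → ℝ≥0∞) (F : En n → ℝ≥0∞) {a b : ℝ} (hab : a ≤ b) :
    sInf {l : ℝ≥0∞ | 0 < l ∧ rhoP p (fun x => F x / ENNReal.ofReal b / l ^ ((q x)⁻¹).toReal) ≤ 1}
      ≤ sInf {l : ℝ≥0∞ | 0 < l ∧
          rhoP p (fun x => F x / ENNReal.ofReal a / l ^ ((q x)⁻¹).toReal) ≤ 1} := by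
  apply sInf_le_sInf
  rintro l ⟨hl, hρ⟩
  refine ⟨hl, le_trans (lintegral_mono fun x => omegaP_mono_s4 ?_) hρ⟩
  exact ENNReal.div_le_div_right
    (ENNReal.div_le_div_left (ENNReal.ofReal_le_ofReal hab) _) _

lemma inner_scale {n : ℕ} (p q : En n → ℝ≥0∞) (hq1 : ∀ x, 1 ≤ q x)
    (hqb : essSup q volume ≠ ∞) (F : En n → ℝ≥0∞) {a b : ℝ} (ha : 0 < a) (hab : a ≤ b) :
    sInf {l : ℝ≥0∞ | 0 < l ∧ rhoP p (fun x => F x / ENNReal.ofReal a / l ^ ((q x)⁻¹).toReal) ≤ 1}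
      ≤ ENNReal.ofReal ((b / a) ^ (essSup q volume).toReal) *
        sInf {l : ℝ≥0∞ | 0 < l ∧
          rhoP p (fun x => F x / ENNReal.ofReal b / l ^ ((q x)⁻¹).toReal) ≤ 1} := by
  set Q := (essSup q volume).toReal with hQ
  set c := ENNReal.ofReal ((b / a) ^ Q) with hc
  have hb : 0 < b := ha.trans_le hab
  have hba : 1 ≤ b / a := (one_le_div ha).2 hab
  have hQ0 : 0 ≤ Q := ENNReal.toReal_nonneg
  have hc1 : (1 : ℝ≥0∞) ≤ c := ENNReal.one_le_ofReal.2 (Real.one_le_rpow hba hQ0)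
  have hc0 : c ≠ 0 := (zero_lt_one.trans_le hc1).ne'
  have hct : c ≠ ∞ := ENNReal.ofReal_ne_top
  rw [mul_comm, ← ENNReal.div_le_iff_le_mul (Or.inl hc0) (Or.inl hct)]
  refine le_sInf fun l hl => ?_
  rw [ENNReal.div_le_iff_le_mul (Or.inl hc0) (Or.inl hct), mul_comm]
  refine sInf_le ⟨ENNReal.mul_pos hc0 hl.1.ne', ?_⟩
  refine le_trans (lintegral_mono_ae ?_) hl.2
  filter_upwards [ENNReal.ae_le_essSup q] with x hx
  apply omegaP_mono_s4
  have hq0 : q x ≠ 0 := (zero_lt_one.trans_le (hq1 x)).ne'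
  have hqt : q x ≠ ∞ := (hx.trans_lt hqb.lt_top).ne
  set r := ((q x)⁻¹).toReal with hr
  have hr0 : (0 : ℝ) ≤ r := ENNReal.toReal_nonneg
  have h1Qr : 1 ≤ Q * r := by
    have ht0 : 0 < (q x).toReal := ENNReal.toReal_pos hq0 hqt
    have ht : (q x).toReal ≤ Q := ENNReal.toReal_mono hqb hx
    rw [hr, ENNReal.toReal_inv]
    calc (1:ℝ) = (q x).toReal * (q x).toReal⁻¹ := (mul_inv_cancel₀ ht0.ne').symm
    _ ≤ Q * (q x).toReal⁻¹ := mul_le_mul_of_nonneg_right ht (inv_nonneg.2 ht0.le)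
  have hcr : ENNReal.ofReal (b / a) ≤ c ^ r := by
    rw [hc, ← ENNReal.ofReal_rpow_of_pos (by positivity), ← ENNReal.rpow_mul]
    calc ENNReal.ofReal (b / a) = ENNReal.ofReal (b / a) ^ (1:ℝ) := (ENNReal.rpow_one _).symm
    _ ≤ ENNReal.ofReal (b / a) ^ (Q * r) :=
        ENNReal.rpow_le_rpow_of_exponent_le (ENNReal.one_le_ofReal.2 hba) h1Qr
  have hab' : a * (b / a) = b := by field_simp
  have key : ENNReal.ofReal b * l ^ r ≤ ENNReal.ofReal a * (c * l) ^ r := by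
    rw [ENNReal.mul_rpow_of_nonneg _ _ hr0, ← mul_assoc]
    calc ENNReal.ofReal b * l ^ r
        = ENNReal.ofReal a * ENNReal.ofReal (b / a) * l ^ r := by
          rw [← ENNReal.ofReal_mul ha.le, hab']
    _ ≤ ENNReal.ofReal a * c ^ r * l ^ r := by gcongr
  rw [ennreal_div_div (F x) (ENNReal.ofReal_pos.2 ha).ne' ENNReal.ofReal_ne_top,
    ennreal_div_div (F x) (ENNReal.ofReal_pos.2 hb).ne' ENNReal.ofReal_ne_top]
  exact ENNReal.div_le_div_left key (F x)

end Aux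

open Topology in
/-- continuity of the mixed modular in the scaling parameter when
`p⁺ < ∞` and `q⁺ < ∞`. -/
theorem stmt4 {n : ℕ} (p q : En n → ℝ≥0∞) (hp : IsExponent p) (hq : IsExponent q)
    (hpb : essSup p volume ≠ ∞) (hqb : essSup q volume ≠ ∞)
    (f : ℕ → En n → ℝ) (hf : ∀ j, Measurable (f j))
    (hmem : mixedNorm q p (fun j => nnAbs (f j)) ≠ ∞) :
    ContinuousOn
      (fun μ : ℝ => mixedModular q p (fun j x => nnAbs (f j) x / ENNReal.ofReal μ))
      (Set.Ioi (0 : ℝ)) := by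
  have hq1 : ∀ x, 1 ≤ q x := hq.2
  set Q := (essSup q volume).toReal with hQdef
  set S : ℝ → ℝ≥0∞ :=
    fun μ => mixedModular q p (fun j x => nnAbs (f j) x / ENNReal.ofReal μ) with hS
  have hmono : ∀ a b : ℝ, a ≤ b → S b ≤ S a := by
    intro a b hab
    exact ENNReal.tsum_le_tsum fun j => inner_mono p q (nnAbs (f j)) hab
  have hscale : ∀ a b : ℝ, 0 < a → a ≤ b → S a ≤ ENNReal.ofReal ((b / a) ^ Q) * S b := by
    intro a b ha hab
    calc S a ≤ ∑' j, ENNReal.ofReal ((b / a) ^ Q) *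
        sInf {l : ℝ≥0∞ | 0 < l ∧
          rhoP p (fun x => nnAbs (f j) x / ENNReal.ofReal b / l ^ ((q x)⁻¹).toReal) ≤ 1} :=
      ENNReal.tsum_le_tsum fun j => inner_scale p q hq1 hqb (nnAbs (f j)) ha hab
    _ = _ := ENNReal.tsum_mul_left
  obtain ⟨m, hm, hmlt⟩ :
      ∃ m ∈ {m : ℝ≥0∞ | 0 < m ∧
        mixedModular q p (fun j x => nnAbs (f j) x / m) ≤ 1}, m < ∞ :=
    sInf_lt_iff.1 (lt_top_iff_ne_top.2 hmem)
  set μ₁ := m.toReal with hμ₁def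
  have hμ₁ : 0 < μ₁ := ENNReal.toReal_pos hm.1.ne' hmlt.ne
  have hS1 : S μ₁ ≤ 1 := by
    show mixedModular q p (fun j x => nnAbs (f j) x / ENNReal.ofReal μ₁) ≤ 1
    rw [hμ₁def, ENNReal.ofReal_toReal hmlt.ne]
    exact hm.2
  have hSfin : ∀ μ : ℝ, 0 < μ → S μ ≠ ∞ := by
    intro μ hμ
    rcases le_total μ μ₁ with h | h
    · refine ne_top_of_le_ne_top ?_ (hscale μ μ₁ hμ h)
      exact ENNReal.mul_ne_top ENNReal.ofReal_ne_top
        (ne_top_of_le_ne_top ENNReal.one_ne_top hS1)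
    · exact ne_top_of_le_ne_top ENNReal.one_ne_top ((hmono μ₁ μ h).trans hS1)
  intro μ₀ hμ₀
  have hμ₀' : (0:ℝ) < μ₀ := hμ₀
  set c : ℝ → ℝ≥0∞ := fun μ => ENNReal.ofReal ((max (μ / μ₀) (μ₀ / μ)) ^ Q) with hcdef
  have hQ0 : (0:ℝ) ≤ Q := ENNReal.toReal_nonneg
  have hc1 : ∀ μ : ℝ, 0 < μ → 1 ≤ c μ := by
    intro μ hμ
    apply ENNReal.one_le_ofReal.2
    apply Real.one_le_rpow ?_ hQ0
    rcases le_total μ μ₀ with h | h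
    · exact le_max_of_le_right ((one_le_div hμ).2 h)
    · exact le_max_of_le_left ((one_le_div hμ₀').2 h)
  have hupper : ∀ μ : ℝ, 0 < μ → S μ ≤ c μ * S μ₀ := by
    intro μ hμ
    rcases le_total μ μ₀ with h | h
    · refine (hscale μ μ₀ hμ h).trans ?_
      gcongr
      exact ENNReal.ofReal_le_ofReal
        (Real.rpow_le_rpow (by positivity) (le_max_right _ _) hQ0)
    · calc S μ ≤ S μ₀ := hmono μ₀ μ h
      _ ≤ c μ * S μ₀ := le_mul_of_one_le_left' (hc1 μ hμ)
  have hlower : ∀ μ : ℝ, 0 < μ → S μ₀ / c μ ≤ S μ := by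
    intro μ hμ
    rcases le_total μ μ₀ with h | h
    · refine le_trans (ENNReal.div_le_of_le_mul ?_) (hmono μ μ₀ h)
      exact le_mul_of_one_le_right' (hc1 μ hμ)
    · refine ENNReal.div_le_of_le_mul ?_
      refine (hscale μ₀ μ hμ₀' h).trans ?_
      rw [mul_comm]
      gcongr
      exact ENNReal.ofReal_le_ofReal
        (Real.rpow_le_rpow (by positivity) (le_max_left _ _) hQ0)
  have hctend : Tendsto c (𝓝[Set.Ioi (0:ℝ)] μ₀) (𝓝 1) := by
    have h1 : ContinuousAt (fun μ : ℝ => max (μ / μ₀) (μ₀ / μ)) μ₀ := by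
      exact ContinuousAt.sup ((continuous_id.div_const μ₀).continuousAt)
        (continuousAt_const.div continuousAt_id hμ₀'.ne')
    have h2 : ContinuousAt (fun μ : ℝ => (max (μ / μ₀) (μ₀ / μ)) ^ Q) μ₀ :=
      (Real.continuousAt_rpow_const _ _ (Or.inr hQ0)).comp h1
    have h3 : ContinuousAt c μ₀ := ENNReal.continuous_ofReal.continuousAt.comp h2
    have h4 : c μ₀ = 1 := by
      simp [hcdef, div_self hμ₀'.ne', Real.one_rpow]
    have := h3.continuousWithinAt (s := Set.Ioi (0:ℝ))
    rw [ContinuousWithinAt, h4] at this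
    exact this
  have hub : Tendsto (fun μ => c μ * S μ₀) (𝓝[Set.Ioi (0:ℝ)] μ₀) (𝓝 (S μ₀)) := by
    have := ENNReal.Tendsto.mul_const (b := S μ₀) hctend (Or.inl one_ne_zero)
    simpa using this
  have hlb : Tendsto (fun μ => S μ₀ / c μ) (𝓝[Set.Ioi (0:ℝ)] μ₀) (𝓝 (S μ₀)) := by
    have hinv : Tendsto (fun μ => (c μ)⁻¹) (𝓝[Set.Ioi (0:ℝ)] μ₀) (𝓝 1) := by
      simpa using ENNReal.tendsto_inv_iff.2 hctend
    have := ENNReal.Tendsto.const_mul (a := S μ₀) hinv (Or.inl one_ne_zero)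
    simpa [div_eq_mul_inv] using this
  refine tendsto_of_tendsto_of_tendsto_of_le_of_le' hlb hub ?_ ?_
  · filter_upwards [self_mem_nhdsWithin] with μ hμ using hlower μ hμ
  · filter_upwards [self_mem_nhdsWithin] with μ hμ using hupper μ hμ
end

section
/- Let p, q : ℝⁿ → [1,∞] be measurable exponents. Then for every (f_j)_{j∈ℕ₀} ∈ ℓ^{q(·)}(L^{p(·)}), ‖(f_j)_j‖_{ℓ^{q(·)}(L^{p(·)})} ≈ sup { Σ_{j=0}^∞ ∫_{ℝⁿ} |f_j(x)||g_j(x)| dx : ‖(g_j)_j‖_{ℓ^{q′(·)}(L^{p′(·)})} ≤ 1 }, with implicit constants independent of (f_j)_j. -/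
open MeasureTheory ENNReal Filter
open scoped SchwartzMap FourierTransform

noncomputable section
namespace S6

lemma omegaP_zero {p : ℝ≥0∞} (hp : 1 ≤ p) : omegaP p 0 = 0 := by
  unfold omegaP
  split_ifs with h h2
  · rfl
  · exact absurd zero_le_one h2
  · exact ENNReal.zero_rpow_of_pos (ENNReal.toReal_pos (by intro h0; simp [h0] at hp) h)

lemma omegaP_mono (p : ℝ≥0∞) : Monotone (omegaP p) := by
  intro a b hab
  unfold omegaP
  by_cases h : p = ∞
  · simp only [h, if_true]
    by_cases hb : b ≤ 1
    · rw [if_pos (hab.trans hb), if_pos hb]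
    · split_ifs <;> simp
  · simp only [h, if_false]
    exact ENNReal.rpow_le_rpow hab ENNReal.toReal_nonneg

lemma measurable_omegaP {n : ℕ} {p t : En n → ℝ≥0∞} (hp : Measurable p) (ht : Measurable t) :
    Measurable fun x => omegaP (p x) (t x) := by
  unfold omegaP
  refine Measurable.ite (hp (measurableSet_singleton ∞)) ?_ (ht.pow hp.ennreal_toReal)
  exact Measurable.ite (measurableSet_le ht measurable_const) measurable_const measurable_const

lemma conj_ge_one {a b : ℝ≥0∞} (h : a⁻¹ + b⁻¹ = 1) : 1 ≤ b := by
  have hb : b⁻¹ ≤ 1 := h ▸ le_add_self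
  exact ENNReal.inv_le_one.mp hb

lemma conj_of_one {b : ℝ≥0∞} (h : (1:ℝ≥0∞)⁻¹ + b⁻¹ = 1) : b = ∞ := by
  rw [inv_one] at h
  have hb : b⁻¹ = 0 := by
    by_contra hb
    have : 1 < 1 + b⁻¹ := ENNReal.lt_add_right one_ne_top hb
    simp [h] at this
  simpa [ENNReal.inv_eq_zero] using hb

lemma conj_of_top {b : ℝ≥0∞} (h : (∞:ℝ≥0∞)⁻¹ + b⁻¹ = 1) : b = 1 := by
  rw [ENNReal.inv_top, zero_add] at h
  rwa [ENNReal.inv_eq_one] at h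

lemma conj_symm {a b : ℝ≥0∞} (h : a⁻¹ + b⁻¹ = 1) : b⁻¹ + a⁻¹ = 1 := by rwa [add_comm]

/-- In the case `1 < p < ∞`, facts about the conjugate. -/
lemma conj_finite {a b : ℝ≥0∞} (ha1 : 1 < a) (hat : a ≠ ∞) (h : a⁻¹ + b⁻¹ = 1) :
    1 < b ∧ b ≠ ∞ ∧ a.toReal.HolderConjugate b.toReal := by
  have hb1 : 1 ≤ b := conj_ge_one h
  have hbt : b ≠ ∞ := by
    intro hbt
    rw [hbt, ENNReal.inv_top, add_zero, ENNReal.inv_eq_one] at h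
    exact ha1.ne' h
  have hbne1 : b ≠ 1 := by
    intro hb1'
    rw [hb1', inv_one] at h
    have : a⁻¹ = 0 := by
      by_contra hA
      have : 1 < a⁻¹ + 1 := by
        nth_rewrite 1 [← zero_add (1:ℝ≥0∞)]
        exact ENNReal.add_lt_add_right one_ne_top (pos_iff_ne_zero.mpr hA)
      simp [h] at this
    rw [ENNReal.inv_eq_zero] at this
    exact hat this
  have hb1' : 1 < b := lt_of_le_of_ne hb1 (Ne.symm hbne1)
  refine ⟨hb1', hbt, ?_⟩
  have har : 1 < a.toReal := by
    rw [← ENNReal.toReal_one]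
    exact ENNReal.toReal_lt_toReal one_ne_top hat |>.mpr ha1
  have hsum : a.toReal⁻¹ + b.toReal⁻¹ = 1 := by
    have ha' : a⁻¹ ≠ ∞ := by simp [(one_pos.trans ha1).ne']
    have hb' : b⁻¹ ≠ ∞ := by simp [(one_pos.trans hb1').ne']
    have := congrArg ENNReal.toReal h
    rwa [ENNReal.toReal_add ha' hb', ENNReal.toReal_inv, ENNReal.toReal_inv,
      ENNReal.toReal_one] at this
  exact Real.holderConjugate_iff.mpr ⟨har, by simpa [one_div] using hsum⟩


/-- Pointwise Young inequality for `omegaP`. -/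
lemma young_omega {p p' : ℝ≥0∞} (hp1 : 1 ≤ p) (h : p⁻¹ + p'⁻¹ = 1) (a b : ℝ≥0∞) :
    a * b ≤ omegaP p a + omegaP p' b := by
  by_cases hpt : p = ∞
  · have hp'1 : p' = 1 := conj_of_top (hpt ▸ h)
    subst hpt; subst hp'1
    unfold omegaP
    simp only [if_true, one_ne_top, if_false, ENNReal.toReal_one, ENNReal.rpow_one]
    by_cases ha : a ≤ 1
    · rw [if_pos ha, zero_add]
      calc a * b ≤ 1 * b := mul_le_mul_left ha b
      _ = b := one_mul b
    · rw [if_neg ha]; simp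
  by_cases hp1' : p = 1
  · have hp't : p' = ∞ := conj_of_one (hp1' ▸ h)
    subst hp't; subst hp1'
    unfold omegaP
    simp only [if_true, one_ne_top, if_false, ENNReal.toReal_one, ENNReal.rpow_one]
    by_cases hb : b ≤ 1
    · rw [if_pos hb, add_zero]
      calc a * b ≤ a * 1 := mul_le_mul_right hb a
      _ = a := mul_one a
    · rw [if_neg hb]; simp
  · have hplt : 1 < p := lt_of_le_of_ne hp1 (Ne.symm hp1')
    obtain ⟨hp'lt, hp't, hconj⟩ := conj_finite hplt hpt h
    unfold omegaP
    rw [if_neg hpt, if_neg hp't]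
    calc a * b ≤ a ^ p.toReal / ENNReal.ofReal p.toReal
          + b ^ p'.toReal / ENNReal.ofReal p'.toReal := ENNReal.young_inequality a b hconj
    _ ≤ a ^ p.toReal + b ^ p'.toReal := by
        have key : ∀ (X c : ℝ≥0∞), 1 ≤ c → X / c ≤ X := fun X c hc => by
          rw [div_eq_mul_inv]
          calc X * c⁻¹ ≤ X * 1 := mul_le_mul_right (ENNReal.inv_le_one.mpr hc) X
          _ = X := mul_one X
        have h1 : (1:ℝ≥0∞) ≤ ENNReal.ofReal p.toReal := by
          rw [← ENNReal.ofReal_one]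
          exact ENNReal.ofReal_le_ofReal hconj.lt.le
        have h2 : (1:ℝ≥0∞) ≤ ENNReal.ofReal p'.toReal := by
          rw [← ENNReal.ofReal_one]
          exact ENNReal.ofReal_le_ofReal hconj.symm.lt.le
        exact add_le_add (key _ _ h1) (key _ _ h2)

/-- Weighted AM-GM type estimate. -/
lemma rpow_mul_rpow_le {l k : ℝ≥0∞} {θ θ' : ℝ} (hθ : 0 ≤ θ) (hθ' : 0 ≤ θ')
    (hsum : θ + θ' = 1) (hl0 : l ≠ 0) (hlt : l ≠ ∞) (hk0 : k ≠ 0) (hkt : k ≠ ∞) :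
    l ^ θ * k ^ θ' ≤ l + k := by
  rcases le_total l k with hlk | hlk
  · calc l ^ θ * k ^ θ' ≤ k ^ θ * k ^ θ' := by
          exact mul_le_mul_left (ENNReal.rpow_le_rpow hlk hθ) _
    _ = k ^ (θ + θ') := (ENNReal.rpow_add θ θ' hk0 hkt).symm
    _ = k := by rw [hsum, ENNReal.rpow_one]
    _ ≤ l + k := le_add_self
  · calc l ^ θ * k ^ θ' ≤ l ^ θ * l ^ θ' := by
          exact mul_le_mul_right (ENNReal.rpow_le_rpow hlk hθ') _
    _ = l ^ (θ + θ') := (ENNReal.rpow_add θ θ' hl0 hlt).symm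
    _ = l := by rw [hsum, ENNReal.rpow_one]
    _ ≤ l + k := le_self_add

lemma rhoP_mono {n : ℕ} (p : En n → ℝ≥0∞) {F G : En n → ℝ≥0∞} (h : ∀ x, F x ≤ G x) :
    rhoP p F ≤ rhoP p G :=
  lintegral_mono fun x => omegaP_mono (p x) (h x)

lemma rhoP_zero {n : ℕ} {p : En n → ℝ≥0∞} (hp1 : ∀ x, 1 ≤ p x) :
    rhoP p (fun _ => 0) = 0 := by
  unfold rhoP
  simp only [omegaP_zero (hp1 _)]
  exact lintegral_zero

/-- Hölder's inequality on `L^{p(·)}` level via modulars. -/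
lemma holder_single {n : ℕ} {p p' : En n → ℝ≥0∞} (hpm : Measurable p)
    (hp1 : ∀ x, 1 ≤ p x) (hpc : ∀ x, (p x)⁻¹ + (p' x)⁻¹ = 1)
    {a b : En n → ℝ≥0∞} (ha : Measurable a) :
    ∫⁻ x, a x * b x ≤ rhoP p a + rhoP p' b := by
  calc ∫⁻ x, a x * b x ≤ ∫⁻ x, (omegaP (p x) (a x) + omegaP (p' x) (b x)) :=
        lintegral_mono fun x => young_omega (hp1 x) (hpc x) (a x) (b x)
  _ = rhoP p a + rhoP p' b := lintegral_add_left (measurable_omegaP hpm ha) _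

/-- The inner infimum of the mixed modular. -/
def lamInner {n : ℕ} (p : En n → ℝ≥0∞) (θ : En n → ℝ) (F : En n → ℝ≥0∞) : ℝ≥0∞ :=
  sInf {l : ℝ≥0∞ | 0 < l ∧ rhoP p (fun x => F x / l ^ θ x) ≤ 1}

lemma mixedModular_eq {n : ℕ} (q p : En n → ℝ≥0∞) (F : ℕ → En n → ℝ≥0∞) :
    mixedModular q p F = ∑' j, lamInner p (fun x => ((q x)⁻¹).toReal) (F j) := rfl

lemma lamInner_mem_upward {n : ℕ} {p : En n → ℝ≥0∞} {θ : En n → ℝ} (hθ : ∀ x, 0 ≤ θ x)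
    {F : En n → ℝ≥0∞} {l l' : ℝ≥0∞} (hl : l ≤ l')
    (h : l ∈ {l : ℝ≥0∞ | 0 < l ∧ rhoP p (fun x => F x / l ^ θ x) ≤ 1}) :
    l' ∈ {l : ℝ≥0∞ | 0 < l ∧ rhoP p (fun x => F x / l ^ θ x) ≤ 1} := by
  refine ⟨h.1.trans_le hl, le_trans (rhoP_mono p fun x => ?_) h.2⟩
  exact ENNReal.div_le_div_left (ENNReal.rpow_le_rpow hl (hθ x)) _

lemma lamInner_mono {n : ℕ} {p : En n → ℝ≥0∞} {θ : En n → ℝ}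
    {F G : En n → ℝ≥0∞} (h : ∀ x, F x ≤ G x) :
    lamInner p θ F ≤ lamInner p θ G := by
  apply sInf_le_sInf
  rintro l ⟨hl0, hl⟩
  exact ⟨hl0, le_trans (rhoP_mono p fun x => ENNReal.div_le_div_right (h x) _) hl⟩

lemma lamInner_zero {n : ℕ} {p : En n → ℝ≥0∞} (hp1 : ∀ x, 1 ≤ p x) (θ : En n → ℝ) :
    lamInner p θ (fun _ => 0) = 0 := by
  refine le_antisymm ?_ (zero_le)
  refine ENNReal.le_of_forall_pos_le_add fun ε hε _ => ?_
  rw [zero_add]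
  refine sInf_le ⟨ENNReal.coe_pos.mpr hε, ?_⟩
  have : (fun x => (0:ℝ≥0∞) / (ε:ℝ≥0∞) ^ θ x) = fun _ => (0:ℝ≥0∞) := by
    funext x; exact ENNReal.zero_div
  rw [this, rhoP_zero hp1]
  exact zero_le_one

lemma mixedModular_mono {n : ℕ} (q p : En n → ℝ≥0∞) {F G : ℕ → En n → ℝ≥0∞}
    (h : ∀ j x, F j x ≤ G j x) : mixedModular q p F ≤ mixedModular q p G := by
  rw [mixedModular_eq, mixedModular_eq]
  exact ENNReal.tsum_le_tsum fun j => lamInner_mono (h j)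

lemma mixedNorm_le_one {n : ℕ} {q p : En n → ℝ≥0∞} {F : ℕ → En n → ℝ≥0∞}
    (h : mixedModular q p F ≤ 1) : mixedNorm q p F ≤ 1 := by
  apply sInf_le
  refine ⟨one_pos, ?_⟩
  simpa only [div_one] using h

lemma modular_le_one_of_norm_lt {n : ℕ} {q p : En n → ℝ≥0∞} {F : ℕ → En n → ℝ≥0∞}
    {m : ℝ≥0∞} (h : mixedNorm q p F < m) :
    mixedModular q p (fun j x => F j x / m) ≤ 1 := by
  obtain ⟨m₀, hm₀, hm₀m⟩ := sInf_lt_iff.mp h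
  refine le_trans (mixedModular_mono q p fun j x => ?_) hm₀.2
  exact ENNReal.div_le_div_left hm₀m.le _

lemma one_lt_modular_of_lt_norm {n : ℕ} {q p : En n → ℝ≥0∞} {F : ℕ → En n → ℝ≥0∞}
    {m : ℝ≥0∞} (hm : 0 < m) (h : m < mixedNorm q p F) :
    1 < mixedModular q p (fun j x => F j x / m) := by
  by_contra hc
  push_neg at hc
  exact absurd (sInf_le ⟨hm, hc⟩ : mixedNorm q p F ≤ m) (not_le.mpr h)

lemma omegaP_one (t : ℝ≥0∞) : omegaP 1 t = t := by
  unfold omegaP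
  rw [if_neg one_ne_top, ENNReal.toReal_one, ENNReal.rpow_one]

/-- The key lower-duality construction for a single variable-exponent space. -/
lemma lemA {n : ℕ} {p p' : En n → ℝ≥0∞} (hpm : Measurable p) (hp1 : ∀ x, 1 ≤ p x)
    (hpc : ∀ x, (p x)⁻¹ + (p' x)⁻¹ = 1) {h : En n → ℝ≥0∞} (hhm : Measurable h)
    (hfin : ∀ x, h x ≠ ∞) (hrho : 1 < rhoP p h) :
    ∃ G : En n → ℝ, Measurable G ∧ (∀ x, 0 ≤ G x) ∧ rhoP p' (nnAbs G) ≤ 1 ∧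
      1 ≤ ∫⁻ x, h x * nnAbs G x := by
  have hp'1 : ∀ x, 1 ≤ p' x := fun x => conj_ge_one (hpc x)
  set Abig : Set (En n) := {x | p x = ∞} ∩ {x | 1 < h x} with hAbig_def
  have hAbig : MeasurableSet Abig :=
    (hpm (measurableSet_singleton ∞)).inter (measurableSet_lt measurable_const hhm)
  by_cases hbig : volume Abig = 0
  · -- Case 2 : the `p = ∞` part contributes nothing.
    -- Split the modular.
    have hmeas_omega : Measurable fun x => omegaP (p x) (h x) := measurable_omegaP hpm hhm
    set pinf : Set (En n) := {x | p x = ∞} with hpinf_def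
    have hpinfm : MeasurableSet pinf := hpm (measurableSet_singleton ∞)
    have hzero_pinf : ∫⁻ x in pinf, omegaP (p x) (h x) = 0 := by
      have hle : ∀ x, pinf.indicator (fun x => omegaP (p x) (h x)) x ≤
          Abig.indicator (fun _ => (∞:ℝ≥0∞)) x := by
        intro x
        by_cases hx : x ∈ pinf
        · rw [Set.indicator_of_mem hx]
          have hx' : p x = ∞ := hx
          by_cases hx1 : h x ≤ 1
          · unfold omegaP
            rw [if_pos hx', if_pos hx1]
            exact zero_le
          · have : x ∈ Abig := ⟨hx, not_le.mp hx1⟩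
            rw [Set.indicator_of_mem this]
            exact le_top
        · rw [Set.indicator_of_notMem hx]
          exact zero_le
      have := lintegral_mono (μ := volume) hle
      rw [lintegral_indicator hpinfm, lintegral_indicator hAbig] at this
      simp only [MeasureTheory.setLIntegral_const] at this
      rw [hbig, mul_zero] at this
      exact le_antisymm this (zero_le)
    have hrest : 1 < ∫⁻ x in pinfᶜ, omegaP (p x) (h x) := by
      have hsplit := lintegral_add_compl (μ := volume) (fun x => omegaP (p x) (h x)) hpinfm
      rw [hzero_pinf, zero_add] at hsplit
      unfold rhoP at hrho
      rwa [← hsplit] at hrho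
    -- Truncations
    set D : ℕ → Set (En n) := fun k => {x | p x ≤ (k:ℝ≥0∞)} ∩ Metric.ball (0:En n) k
      with hD_def
    have hDm : ∀ k, MeasurableSet (D k) := fun k =>
      (hpm measurableSet_Iic).inter Metric.isOpen_ball.measurableSet
    have hDsub : ∀ {k k' : ℕ}, k ≤ k' → D k ⊆ D k' := by
      intro k k' hkk x hx
      refine ⟨show p x ≤ (k':ℝ≥0∞) from le_trans hx.1 (Nat.cast_le.mpr hkk), ?_⟩
      exact Metric.ball_subset_ball (Nat.cast_le.mpr hkk) hx.2
    set Hk : ℕ → En n → ℝ≥0∞ := fun k => (D k).indicator (fun x => min (h x) k) with hHk_def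
    have hHkm : ∀ k, Measurable (Hk k) := fun k =>
      (hhm.min measurable_const).indicator (hDm k)
    have hHk_eval : ∀ (k : ℕ) (x : En n),
        Hk k x = (D k).indicator (fun x => min (h x) (k:ℝ≥0∞)) x := fun k x => rfl
    have hHk_le_h : ∀ k x, Hk k x ≤ h x := by
      intro k x
      by_cases hx : x ∈ D k
      · rw [hHk_eval, Set.indicator_of_mem hx]; exact min_le_left _ _
      · rw [hHk_eval, Set.indicator_of_notMem hx]; exact zero_le
    have hHk_mono : ∀ {k k' : ℕ}, k ≤ k' → ∀ x, Hk k x ≤ Hk k' x := by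
      intro k k' hkk x
      by_cases hx : x ∈ D k
      · rw [hHk_eval, hHk_eval, Set.indicator_of_mem hx, Set.indicator_of_mem (hDsub hkk hx)]
        exact min_le_min le_rfl (Nat.cast_le.mpr hkk)
      · rw [hHk_eval, Set.indicator_of_notMem hx]
        exact zero_le
    have hsup : ∀ x, (⨆ k, omegaP (p x) (Hk k x)) = omegaP (p x) (pinfᶜ.indicator h x) := by
      intro x
      by_cases hx : p x = ∞
      · have hnot : ∀ k : ℕ, x ∉ D k := by
          intro k hk
          exact (lt_of_le_of_lt hk.1 (ENNReal.natCast_lt_top k)).ne hx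
        have h1 : ∀ k : ℕ, Hk k x = 0 := fun k => by
          rw [hHk_eval]; exact Set.indicator_of_notMem (hnot k) _
        have h2 : pinfᶜ.indicator h x = 0 :=
          Set.indicator_of_notMem (by simpa [hpinf_def] using hx) _
        simp only [h1, h2]
        rw [omegaP_zero (hp1 x), iSup_const]
      · have hxmem : x ∈ pinfᶜ := by simpa [hpinf_def] using hx
        rw [Set.indicator_of_mem hxmem]
        obtain ⟨K₁, hK₁⟩ := ENNReal.exists_nat_gt hx
        obtain ⟨K₂, hK₂⟩ := exists_nat_gt ‖x‖
        obtain ⟨K₃, hK₃⟩ := ENNReal.exists_nat_gt (hfin x)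
        set K := max K₁ (max K₂ K₃) with hK_def
        have hxD : x ∈ D K := by
          constructor
          · exact le_trans hK₁.le (by exact_mod_cast Nat.cast_le.mpr (le_max_left _ _))
          · rw [mem_ball_zero_iff]
            calc ‖x‖ < K₂ := hK₂
            _ ≤ K := by exact_mod_cast le_max_of_le_right (le_max_left _ _)
        have hval : Hk K x = h x := by
          rw [hHk_eval, Set.indicator_of_mem hxD]
          refine min_eq_left ?_
          calc h x ≤ K₃ := hK₃.le
          _ ≤ K := by exact_mod_cast le_max_of_le_right (le_max_right _ _)
        refine le_antisymm (iSup_le fun k => omegaP_mono _ (hHk_le_h k x)) ?_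
        exact le_iSup_of_le K (by rw [hval])
    have hMCT : (⨆ k, ∫⁻ x, omegaP (p x) (Hk k x)) = ∫⁻ x in pinfᶜ, omegaP (p x) (h x) := by
      rw [← lintegral_iSup (fun k => measurable_omegaP hpm (hHkm k))
        (fun k k' hkk x => omegaP_mono _ (hHk_mono hkk x))]
      have : ∀ x, (⨆ k, omegaP (p x) (Hk k x)) =
          pinfᶜ.indicator (fun x => omegaP (p x) (h x)) x := by
        intro x
        rw [hsup x]
        by_cases hx : x ∈ pinfᶜ
        · rw [Set.indicator_of_mem hx, Set.indicator_of_mem hx]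
        · rw [Set.indicator_of_notMem hx, Set.indicator_of_notMem hx,
            omegaP_zero (hp1 x)]
      rw [lintegral_congr this, lintegral_indicator hpinfm.compl]
    obtain ⟨k₀, hk₀⟩ : ∃ k, 1 < ∫⁻ x, omegaP (p x) (Hk k x) := by
      rw [← lt_iSup_iff, hMCT]; exact hrest
    set K := max k₀ 1 with hK_def
    have hK1 : 1 ≤ K := le_max_right _ _
    set H := Hk K with hH_def
    set T := ∫⁻ x, omegaP (p x) (H x) with hT_def
    have hT1 : 1 < T :=
      lt_of_lt_of_le hk₀ (lintegral_mono fun x => omegaP_mono _ (hHk_mono (le_max_left _ _) x))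
    have hT0 : T ≠ 0 := (lt_trans zero_lt_one hT1).ne'
    have hT1' : 1 ≤ T := hT1.le
    have hHK_le : ∀ x, H x ≤ (K:ℝ≥0∞) := by
      intro x; rw [hH_def, hHk_eval]
      by_cases hx : x ∈ D K
      · rw [Set.indicator_of_mem hx]; exact min_le_right _ _
      · rw [Set.indicator_of_notMem hx]; exact zero_le
    have hHfin : ∀ x, H x ≠ ∞ :=
      fun x => (lt_of_le_of_lt (hHK_le x) (ENNReal.natCast_lt_top K)).ne
    have hHm : Measurable H := hHkm K
    have hH_le_h : ∀ x, H x ≤ h x := hHk_le_h K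
    have hH0pinf : ∀ x, p x = ∞ → H x = 0 := by
      intro x hx
      rw [hH_def, hHk_eval]
      refine Set.indicator_of_notMem (fun hxD => ?_) _
      exact (lt_of_le_of_lt hxD.1 (ENNReal.natCast_lt_top K)).ne hx
    have hTfin : T ≠ ∞ := by
      have hb : ∀ x, omegaP (p x) (H x) ≤
          (Metric.ball (0:En n) K).indicator (fun _ => (K:ℝ≥0∞) ^ (K:ℝ)) x := by
        intro x
        by_cases hx : x ∈ D K
        · have hpfin : p x ≠ ∞ := (lt_of_le_of_lt hx.1 (ENNReal.natCast_lt_top K)).ne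
          rw [Set.indicator_of_mem hx.2]
          unfold omegaP
          rw [if_neg hpfin]
          calc H x ^ (p x).toReal ≤ (K:ℝ≥0∞) ^ (p x).toReal :=
                ENNReal.rpow_le_rpow (hHK_le x) ENNReal.toReal_nonneg
          _ ≤ (K:ℝ≥0∞) ^ (K:ℝ) := by
                refine ENNReal.rpow_le_rpow_of_exponent_le (by exact_mod_cast hK1) ?_
                have := ENNReal.toReal_mono (ENNReal.natCast_ne_top K) hx.1
                simpa using this
        · have hz : H x = 0 := by rw [hH_def, hHk_eval]; exact Set.indicator_of_notMem hx _
          rw [hz, omegaP_zero (hp1 x)]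
          exact zero_le
      have hTle := lintegral_mono (μ := volume) hb
      rw [lintegral_indicator Metric.isOpen_ball.measurableSet] at hTle
      simp only [MeasureTheory.setLIntegral_const] at hTle
      refine (lt_of_le_of_lt hTle ?_).ne
      exact ENNReal.mul_lt_top
        (ENNReal.rpow_lt_top_of_nonneg (Nat.cast_nonneg K) (ENNReal.natCast_ne_top K))
        measure_ball_lt_top
    -- the dual function
    set cnd : Set (En n) := {x | p x ≠ ∞} ∩ {x | H x ≠ 0} with hcnd_def
    have hcndm : MeasurableSet cnd :=
      (hpm (measurableSet_singleton ∞)).compl.inter ((hHm (measurableSet_singleton 0)).compl)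
    set G₀ : En n → ℝ≥0∞ := fun x =>
      if x ∈ cnd then H x ^ ((p x).toReal - 1) / T else 0 with hG₀_def
    have hG₀m : Measurable G₀ := by
      refine Measurable.ite hcndm ?_ measurable_const
      exact (hHm.pow (hpm.ennreal_toReal.sub measurable_const)).div measurable_const
    have hpc1 : ∀ x, x ∈ cnd → 1 ≤ (p x).toReal := by
      intro x hx
      rw [← ENNReal.toReal_one]
      exact ENNReal.toReal_mono hx.1 (hp1 x)
    have hG₀fin : ∀ x, G₀ x ≠ ∞ := by
      intro x
      rw [hG₀_def]
      simp only
      split_ifs with hx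
      · have hnum : H x ^ ((p x).toReal - 1) ≠ ∞ :=
          (ENNReal.rpow_lt_top_of_nonneg (by linarith [hpc1 x hx]) (hHfin x)).ne
        exact (ENNReal.div_lt_top hnum hT0).ne
      · exact ENNReal.zero_ne_top
    set G : En n → ℝ := fun x => (G₀ x).toReal with hG_def
    have hGm : Measurable G := hG₀m.ennreal_toReal
    have hGnn : ∀ x, 0 ≤ G x := fun x => ENNReal.toReal_nonneg
    have hnn : ∀ x, nnAbs G x = G₀ x := by
      intro x
      unfold nnAbs
      rw [hG_def]
      simp only
      rw [abs_of_nonneg ENNReal.toReal_nonneg]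
      exact ENNReal.ofReal_toReal (hG₀fin x)
    -- the pointwise product identity
    have hmulG : ∀ x, H x * G₀ x = omegaP (p x) (H x) / T := by
      intro x
      rw [hG₀_def]
      simp only
      split_ifs with hx
      · have hc1 := hpc1 x hx
        have h0 : H x ≠ 0 := hx.2
        rw [← mul_div_assoc]
        congr 1
        nth_rewrite 1 [← ENNReal.rpow_one (H x)]
        rw [← ENNReal.rpow_add _ _ h0 (hHfin x)]
        have he : (1:ℝ) + ((p x).toReal - 1) = (p x).toReal := by ring
        rw [he]
        unfold omegaP
        rw [if_neg hx.1]
      · have hz : H x = 0 := by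
          by_cases hpx : p x = ∞
          · exact hH0pinf x hpx
          · by_contra hHx
            exact hx ⟨hpx, hHx⟩
        rw [hz, mul_zero, omegaP_zero (hp1 x), ENNReal.zero_div]
    have hint_eq : ∫⁻ x, H x * G₀ x = 1 := by
      rw [lintegral_congr hmulG]
      simp_rw [div_eq_mul_inv]
      rw [lintegral_mul_const' T⁻¹ _ (by simp [hT0])]
      rw [← hT_def, ENNReal.mul_inv_cancel hT0 hTfin]
    refine ⟨G, hGm, hGnn, ?_, ?_⟩
    · -- modular of the dual function
      have hle : ∀ x, omegaP (p' x) (G₀ x) ≤ omegaP (p x) (H x) / T := by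
        intro x
        rw [hG₀_def]
        simp only
        split_ifs with hx
        · have hpfin : p x ≠ ∞ := hx.1
          by_cases hp1x : p x = 1
          · have hp'x : p' x = ∞ := by
              have hcx := hpc x
              rw [hp1x] at hcx
              exact conj_of_one hcx
            have hval : H x ^ ((p x).toReal - 1) / T = 1 / T := by
              rw [hp1x]; simp
            unfold omegaP
            rw [if_pos hp'x, hval, if_pos ?_]
            · exact zero_le
            · rw [one_div]
              exact ENNReal.inv_le_one.mpr hT1'
          · have hplt : 1 < p x := lt_of_le_of_ne (hp1 x) (Ne.symm hp1x)
            obtain ⟨hp'lt, hp't, hconj⟩ := conj_finite hplt hpfin (hpc x)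
            set c := (p x).toReal with hc_def
            set c' := (p' x).toReal with hc'_def
            have hcgt : 1 < c := hconj.lt
            have hc'gt : 1 < c' := hconj.symm.lt
            have hcc' : (c - 1) * c' = c := by
              have hs := hconj.inv_add_inv_eq_one
              have hc0 : c ≠ 0 := by positivity
              have hc'0 : c' ≠ 0 := by positivity
              field_simp at hs
              nlinarith [hs]
            have homega' : omegaP (p' x) (H x ^ (c - 1) / T) = (H x ^ (c-1) / T) ^ c' := by
              unfold omegaP; rw [if_neg hp't]
            rw [homega']
            rw [ENNReal.div_rpow_of_nonneg _ _ (by linarith)]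
            rw [← ENNReal.rpow_mul, hcc']
            have hTc' : T ≤ T ^ c' := by
              nth_rewrite 1 [← ENNReal.rpow_one T]
              exact ENNReal.rpow_le_rpow_of_exponent_le hT1' (by linarith)
            have homega : omegaP (p x) (H x) = H x ^ c := by
              unfold omegaP; rw [if_neg hpfin]
            rw [homega]
            exact ENNReal.div_le_div_left hTc' _
        · rw [omegaP_zero (hp'1 x)]
          exact zero_le
      unfold rhoP
      calc ∫⁻ x, omegaP (p' x) (nnAbs G x) = ∫⁻ x, omegaP (p' x) (G₀ x) := by
            apply lintegral_congr; intro x; rw [hnn x]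
      _ ≤ ∫⁻ x, omegaP (p x) (H x) / T := lintegral_mono hle
      _ = 1 := by
            simp_rw [div_eq_mul_inv]
            rw [lintegral_mul_const' T⁻¹ _ (by simp [hT0])]
            rw [← hT_def, ENNReal.mul_inv_cancel hT0 hTfin]
    · calc (1:ℝ≥0∞) = ∫⁻ x, H x * G₀ x := hint_eq.symm
      _ ≤ ∫⁻ x, h x * nnAbs G x := by
            apply lintegral_mono
            intro x
            simp only
            rw [hnn x]
            exact mul_le_mul_left (hH_le_h x) _
  · -- Case 1 : the set `{p = ∞, h > 1}` has positive measure.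
    obtain ⟨k, hk⟩ : ∃ k : ℕ, volume (Abig ∩ Metric.ball (0:En n) k) ≠ 0 := by
      by_contra hall
      push_neg at hall
      have hcover : Abig = ⋃ k : ℕ, Abig ∩ Metric.ball (0:En n) k := by
        rw [← Set.inter_iUnion, Metric.iUnion_ball_nat, Set.inter_univ]
      have : volume Abig = 0 := by
        rw [hcover]
        exact le_antisymm (le_trans (measure_iUnion_le _) (by simp [hall])) (zero_le)
      exact hbig this
    set A := Abig ∩ Metric.ball (0:En n) k with hA_def
    have hAm : MeasurableSet A := hAbig.inter Metric.isOpen_ball.measurableSet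
    have hA0 : volume A ≠ 0 := hk
    have hAt : volume A ≠ ∞ :=
      (lt_of_le_of_lt (measure_mono Set.inter_subset_right) measure_ball_lt_top).ne
    set G : En n → ℝ := A.indicator (fun _ => (volume A).toReal⁻¹) with hG_def
    have hGm : Measurable G := (measurable_const (a := (volume A).toReal⁻¹)).indicator hAm
    have hGnn : ∀ x, 0 ≤ G x := by
      intro x
      rw [hG_def]
      by_cases hx : x ∈ A
      · rw [Set.indicator_of_mem hx]; positivity
      · rw [Set.indicator_of_notMem hx]
    have hnn : ∀ x, nnAbs G x = A.indicator (fun _ => (volume A)⁻¹) x := by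
      intro x
      unfold nnAbs
      rw [abs_of_nonneg (hGnn x), hG_def]
      by_cases hx : x ∈ A
      · rw [Set.indicator_of_mem hx, Set.indicator_of_mem hx, ← ENNReal.toReal_inv,
          ENNReal.ofReal_toReal (by simp [hA0])]
      · rw [Set.indicator_of_notMem hx, Set.indicator_of_notMem hx, ENNReal.ofReal_zero]
    refine ⟨G, hGm, hGnn, ?_, ?_⟩
    · have hle : ∀ x, omegaP (p' x) (nnAbs G x) = A.indicator (fun _ => (volume A)⁻¹) x := by
        intro x
        rw [hnn x]
        by_cases hx : x ∈ A
        · have hpx : p x = ∞ := hx.1.1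
          have hp'x : p' x = 1 := by
            have hcx := hpc x
            rw [hpx] at hcx
            exact conj_of_top hcx
          rw [Set.indicator_of_mem hx, hp'x, omegaP_one]
        · rw [Set.indicator_of_notMem hx, omegaP_zero (hp'1 x)]
      unfold rhoP
      rw [lintegral_congr hle, lintegral_indicator hAm]
      simp only [MeasureTheory.setLIntegral_const]
      rw [ENNReal.inv_mul_cancel hA0 hAt]
    · have hge : ∀ x, A.indicator (fun _ => (volume A)⁻¹) x ≤ h x * nnAbs G x := by
        intro x
        rw [hnn x]
        by_cases hx : x ∈ A
        · rw [Set.indicator_of_mem hx]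
          nth_rewrite 1 [← one_mul ((volume A)⁻¹)]
          exact mul_le_mul_left hx.1.2.le _
        · rw [Set.indicator_of_notMem hx, mul_zero]
      calc (1:ℝ≥0∞) = ∫⁻ x, A.indicator (fun _ => (volume A)⁻¹) x := by
            rw [lintegral_indicator hAm]
            simp only [MeasureTheory.setLIntegral_const]
            rw [ENNReal.inv_mul_cancel hA0 hAt]
      _ ≤ ∫⁻ x, h x * nnAbs G x := lintegral_mono hge

lemma le_of_forall_gt' {a b : ℝ≥0∞} (h : ∀ m, a < m → b ≤ m) : b ≤ a := by
  by_contra hc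
  push_neg at hc
  obtain ⟨m, ham, hmb⟩ := exists_between hc
  exact absurd (h m ham) (not_le.mpr hmb)

lemma theta_sum {q q' : ℝ≥0∞} (hqc : q⁻¹ + q'⁻¹ = 1) :
    (q⁻¹).toReal + (q'⁻¹).toReal = 1 := by
  have h1 : q⁻¹ ≠ ∞ := by
    intro hq
    rw [hq] at hqc
    simp at hqc
  have h2 : q'⁻¹ ≠ ∞ := by
    intro hq
    rw [hq] at hqc
    simp [add_comm] at hqc
  rw [← ENNReal.toReal_add h1 h2, hqc, ENNReal.toReal_one]

/-- Hölder inequality for the mixed space, modular form. -/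
lemma pairing_le {n : ℕ} {p q p' q' : En n → ℝ≥0∞} (hpm : Measurable p) (hqm : Measurable q)
    (hp1 : ∀ x, 1 ≤ p x) (hpc : ∀ x, (p x)⁻¹ + (p' x)⁻¹ = 1)
    (hqc : ∀ x, (q x)⁻¹ + (q' x)⁻¹ = 1)
    {F G : ℕ → En n → ℝ≥0∞} (hFm : ∀ j, Measurable (F j))
    (hmF : mixedModular q p F ≤ 1) (hmG : mixedModular q' p' G ≤ 1) :
    ∑' j, ∫⁻ x, F j x * G j x ≤ 4 := by
  set θ : En n → ℝ := fun x => ((q x)⁻¹).toReal with hθ_def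
  set θ' : En n → ℝ := fun x => ((q' x)⁻¹).toReal with hθ'_def
  have hθm : Measurable θ := hqm.inv.ennreal_toReal
  have hθnn : ∀ x, 0 ≤ θ x := fun x => ENNReal.toReal_nonneg
  have hθ'nn : ∀ x, 0 ≤ θ' x := fun x => ENNReal.toReal_nonneg
  have hθsum : ∀ x, θ x + θ' x = 1 := fun x => theta_sum (hqc x)
  set Λ : ℕ → ℝ≥0∞ := fun j => lamInner p θ (F j) with hΛ_def
  set M : ℕ → ℝ≥0∞ := fun j => lamInner p' θ' (G j) with hM_def
  have hΛsum : ∑' j, Λ j ≤ 1 := le_trans (le_of_eq (mixedModular_eq q p F).symm).ge hmF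
  have hMsum : ∑' j, M j ≤ 1 := le_trans (le_of_eq (mixedModular_eq q' p' G).symm).ge hmG
  have hΛle : ∀ j, Λ j ≤ 1 := fun j => le_trans (ENNReal.le_tsum j) hΛsum
  have hMle : ∀ j, M j ≤ 1 := fun j => le_trans (ENNReal.le_tsum j) hMsum
  refine ENNReal.le_of_forall_pos_le_add fun ε hε _ => ?_
  set δ : ℝ≥0∞ := (ε : ℝ≥0∞) / 8 with hδ_def
  have hδ0 : δ ≠ 0 := by
    simp only [hδ_def]
    exact (ENNReal.div_pos (by exact_mod_cast hε.ne') (by norm_num)).ne'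
  have hδt : δ ≠ ∞ := by
    simp only [hδ_def]
    exact (ENNReal.div_lt_top ENNReal.coe_ne_top (by norm_num)).ne
  set l : ℕ → ℝ≥0∞ := fun j => Λ j + δ * 2⁻¹ ^ j with hl_def
  set k : ℕ → ℝ≥0∞ := fun j => M j + δ * 2⁻¹ ^ j with hk_def
  have hgeom : ∀ j : ℕ, δ * 2⁻¹ ^ j ≠ 0 := by
    intro j
    refine mul_ne_zero hδ0 (pow_ne_zero j ?_)
    simp
  have hgeomt : ∀ j : ℕ, δ * 2⁻¹ ^ j ≠ ∞ := by
    intro j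
    exact ENNReal.mul_ne_top hδt (pow_ne_top (by simp))
  have hl0 : ∀ j, 0 < l j := fun j =>
    lt_of_lt_of_le (pos_iff_ne_zero.mpr (hgeom j)) le_add_self
  have hlt : ∀ j, l j ≠ ∞ := fun j =>
    ENNReal.add_ne_top.mpr ⟨(lt_of_le_of_lt (hΛle j) ENNReal.one_lt_top).ne, hgeomt j⟩
  have hk0 : ∀ j, 0 < k j := fun j =>
    lt_of_lt_of_le (pos_iff_ne_zero.mpr (hgeom j)) le_add_self
  have hkt : ∀ j, k j ≠ ∞ := fun j =>
    ENNReal.add_ne_top.mpr ⟨(lt_of_le_of_lt (hMle j) ENNReal.one_lt_top).ne, hgeomt j⟩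
  have hlmem : ∀ j, rhoP p (fun x => F j x / (l j) ^ θ x) ≤ 1 := by
    intro j
    have hΛlt : Λ j < l j := ENNReal.lt_add_right
      (lt_of_le_of_lt (hΛle j) ENNReal.one_lt_top).ne (hgeom j)
    obtain ⟨l₀, hl₀mem, hl₀lt⟩ := sInf_lt_iff.mp hΛlt
    exact (lamInner_mem_upward hθnn hl₀lt.le hl₀mem).2
  have hkmem : ∀ j, rhoP p' (fun x => G j x / (k j) ^ θ' x) ≤ 1 := by
    intro j
    have hMlt : M j < k j := ENNReal.lt_add_right
      (lt_of_le_of_lt (hMle j) ENNReal.one_lt_top).ne (hgeom j)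
    obtain ⟨k₀, hk₀mem, hk₀lt⟩ := sInf_lt_iff.mp hMlt
    exact (lamInner_mem_upward hθ'nn hk₀lt.le hk₀mem).2
  have hkey : ∀ j, ∫⁻ x, F j x * G j x ≤ (l j + k j) * 2 := by
    intro j
    have hpoint : ∀ x, F j x * G j x ≤
        (l j + k j) * ((F j x / (l j) ^ θ x) * (G j x / (k j) ^ θ' x)) := by
      intro x
      have hu0 : (l j) ^ θ x ≠ 0 := (ENNReal.rpow_pos (hl0 j) (hlt j)).ne'
      have hut : (l j) ^ θ x ≠ ∞ := ENNReal.rpow_ne_top_of_nonneg (hθnn x) (hlt j)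
      have hv0 : (k j) ^ θ' x ≠ 0 := (ENNReal.rpow_pos (hk0 j) (hkt j)).ne'
      have hvt : (k j) ^ θ' x ≠ ∞ := ENNReal.rpow_ne_top_of_nonneg (hθ'nn x) (hkt j)
      calc F j x * G j x
          = ((F j x / (l j) ^ θ x) * (l j) ^ θ x) *
            ((G j x / (k j) ^ θ' x) * (k j) ^ θ' x) := by
            rw [ENNReal.div_mul_cancel hu0 hut, ENNReal.div_mul_cancel hv0 hvt]
      _ = ((l j) ^ θ x * (k j) ^ θ' x) *
            ((F j x / (l j) ^ θ x) * (G j x / (k j) ^ θ' x)) := by ring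
      _ ≤ (l j + k j) * ((F j x / (l j) ^ θ x) * (G j x / (k j) ^ θ' x)) := by
            exact mul_le_mul_left
              (rpow_mul_rpow_le (hθnn x) (hθ'nn x) (hθsum x)
                (hl0 j).ne' (hlt j) (hk0 j).ne' (hkt j)) _
    calc ∫⁻ x, F j x * G j x
        ≤ ∫⁻ x, (l j + k j) * ((F j x / (l j) ^ θ x) * (G j x / (k j) ^ θ' x)) :=
          lintegral_mono hpoint
    _ = (l j + k j) * ∫⁻ x, (F j x / (l j) ^ θ x) * (G j x / (k j) ^ θ' x) :=
          lintegral_const_mul' _ _ (ENNReal.add_ne_top.mpr ⟨hlt j, hkt j⟩)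
    _ ≤ (l j + k j) * (rhoP p (fun x => F j x / (l j) ^ θ x)
          + rhoP p' (fun x => G j x / (k j) ^ θ' x)) := by
          refine mul_le_mul_right ?_ _
          exact holder_single hpm hp1 hpc ((hFm j).div (measurable_const.pow hθm))
    _ ≤ (l j + k j) * 2 := by
          refine mul_le_mul_right ?_ _
          calc rhoP p (fun x => F j x / (l j) ^ θ x)
              + rhoP p' (fun x => G j x / (k j) ^ θ' x) ≤ 1 + 1 :=
                add_le_add (hlmem j) (hkmem j)
          _ = 2 := one_add_one_eq_two
  have hδgeom : ∑' j : ℕ, δ * 2⁻¹ ^ j = 2 * δ := by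
    rw [ENNReal.tsum_mul_left, ENNReal.tsum_geometric, mul_comm]
    congr 1
    rw [ENNReal.one_sub_inv_two, inv_inv]
  have hls : ∑' j, l j ≤ 1 + 2 * δ := by
    calc ∑' j, l j = ∑' j, Λ j + ∑' j : ℕ, δ * 2⁻¹ ^ j := ENNReal.tsum_add
    _ ≤ 1 + 2 * δ := by rw [hδgeom]; exact add_le_add_left hΛsum _
  have hks : ∑' j, k j ≤ 1 + 2 * δ := by
    calc ∑' j, k j = ∑' j, M j + ∑' j : ℕ, δ * 2⁻¹ ^ j := ENNReal.tsum_add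
    _ ≤ 1 + 2 * δ := by rw [hδgeom]; exact add_le_add_left hMsum _
  calc ∑' j, ∫⁻ x, F j x * G j x ≤ ∑' j, (l j + k j) * 2 := ENNReal.tsum_le_tsum hkey
  _ = (∑' j, (l j + k j)) * 2 := ENNReal.tsum_mul_right
  _ = (∑' j, l j + ∑' j, k j) * 2 := by rw [ENNReal.tsum_add]
  _ ≤ ((1 + 2 * δ) + (1 + 2 * δ)) * 2 := mul_le_mul_left (add_le_add hls hks) _
  _ = 4 + 8 * δ := by ring
  _ = 4 + ε := by
      rw [hδ_def, ENNReal.mul_div_cancel' (by norm_num) (by norm_num)]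

/-- The lower-duality construction for the mixed space. -/
lemma lower_bound {n : ℕ} {p q p' q' : En n → ℝ≥0∞}
    (hpm : Measurable p) (hp1 : ∀ x, 1 ≤ p x) (hqm : Measurable q) (hq'm : Measurable q')
    (hpc : ∀ x, (p x)⁻¹ + (p' x)⁻¹ = 1) (hqc : ∀ x, (q x)⁻¹ + (q' x)⁻¹ = 1)
    {F : ℕ → En n → ℝ≥0∞} (hFm : ∀ j, Measurable (F j)) (hFfin : ∀ j x, F j x ≠ ∞)
    {m : ℝ≥0∞} (hm0 : m ≠ 0) (hmt : m ≠ ∞)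
    (hmod : 1 < mixedModular q p (fun j x => F j x / m)) :
    ∃ g : ℕ → En n → ℝ, (∀ j, Measurable (g j)) ∧
      mixedNorm q' p' (fun j => nnAbs (g j)) ≤ 1 ∧
      m ≤ 2 * ∑' j, ∫⁻ x, F j x * nnAbs (g j) x := by
  have hp'1 : ∀ x, 1 ≤ p' x := fun x => conj_ge_one (hpc x)
  set θ : En n → ℝ := fun x => ((q x)⁻¹).toReal with hθ_def
  set θ' : En n → ℝ := fun x => ((q' x)⁻¹).toReal with hθ'_def
  have hθ'meas : Measurable θ' := hq'm.inv.ennreal_toReal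
  have hθmeas : Measurable θ := hqm.inv.ennreal_toReal
  have hθnn : ∀ x, 0 ≤ θ x := fun x => ENNReal.toReal_nonneg
  have hθ'nn : ∀ x, 0 ≤ θ' x := fun x => ENNReal.toReal_nonneg
  have hθsum : ∀ x, θ x + θ' x = 1 := fun x => theta_sum (hqc x)
  set H : ℕ → En n → ℝ≥0∞ := fun j x => F j x / m with hH_def
  have hHm : ∀ j, Measurable (H j) := fun j => (hFm j).div measurable_const
  have hHfin : ∀ j x, H j x ≠ ∞ := fun j x => (ENNReal.div_lt_top (hFfin j x) hm0).ne
  have hFH : ∀ j x, F j x = m * H j x := fun j x =>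
    (ENNReal.mul_div_cancel hm0 hmt).symm
  set Λ : ℕ → ℝ≥0∞ := fun j => lamInner p θ (H j) with hΛ_def
  have hΛtsum : 1 < ∑' j, Λ j := by
    rw [mixedModular_eq] at hmod
    exact hmod
  by_cases hbig : ∃ j₀, 1 < Λ j₀
  · -- one single layer already has large modular
    obtain ⟨j₀, hj₀⟩ := hbig
    have hrho : 1 < rhoP p (H j₀) := by
      by_contra hc
      push_neg at hc
      have h1mem : (1:ℝ≥0∞) ∈ {l : ℝ≥0∞ | 0 < l ∧
          rhoP p (fun x => H j₀ x / l ^ θ x) ≤ 1} := by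
        refine ⟨one_pos, ?_⟩
        have : (fun x => H j₀ x / (1:ℝ≥0∞) ^ θ x) = H j₀ := by
          funext x; rw [ENNReal.one_rpow, div_one]
        rwa [this]
      exact absurd (sInf_le h1mem : Λ j₀ ≤ 1) (not_le.mpr hj₀)
    obtain ⟨G, hGm, hGnn, hGrho, hGpair⟩ := lemA hpm hp1 hpc (hHm j₀) (hHfin j₀) hrho
    classical
    refine ⟨fun j => if j = j₀ then G else 0, ?_, ?_, ?_⟩
    · intro j
      by_cases hj : j = j₀ <;> simp [hj, hGm, measurable_zero]
    · refine mixedNorm_le_one ?_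
      rw [mixedModular_eq]
      calc ∑' j, lamInner p' θ' (nnAbs (if j = j₀ then G else 0))
          ≤ ∑' j, (if j = j₀ then 1 else 0) := by
            refine ENNReal.tsum_le_tsum fun j => ?_
            by_cases hj : j = j₀
            · rw [if_pos hj, if_pos hj]
              refine sInf_le ⟨one_pos, ?_⟩
              have : (fun x => nnAbs G x / (1:ℝ≥0∞) ^ θ' x) = nnAbs G := by
                funext x; rw [ENNReal.one_rpow, div_one]
              rwa [this]
            · rw [if_neg hj, if_neg hj]
              have : nnAbs (0 : En n → ℝ) = fun _ => 0 := by
                funext x; simp [nnAbs]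
              rw [this, lamInner_zero hp'1]
      _ = 1 := tsum_ite_eq j₀ 1
    · have hj₀le : ∫⁻ x, F j₀ x * nnAbs G x ≤
          ∑' j, ∫⁻ x, F j x * nnAbs ((fun j => if j = j₀ then G else 0) j) x := by
        have := ENNReal.le_tsum (f := fun j =>
          ∫⁻ x, F j x * nnAbs (if j = j₀ then G else 0) x) j₀
        simpa using this
      have hm_le : m ≤ ∫⁻ x, F j₀ x * nnAbs G x := by
        have : ∫⁻ x, F j₀ x * nnAbs G x = m * ∫⁻ x, H j₀ x * nnAbs G x := by
          rw [← lintegral_const_mul' m _ hmt]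
          apply lintegral_congr
          intro x
          rw [hFH j₀ x, mul_assoc]
        rw [this]
        calc m = m * 1 := (mul_one m).symm
        _ ≤ m * ∫⁻ x, H j₀ x * nnAbs G x := mul_le_mul_right hGpair _
      calc m ≤ ∫⁻ x, F j₀ x * nnAbs G x := hm_le
      _ ≤ ∑' j, ∫⁻ x, F j x * nnAbs ((fun j => if j = j₀ then G else 0) j) x := hj₀le
      _ ≤ 2 * ∑' j, ∫⁻ x, F j x * nnAbs ((fun j => if j = j₀ then G else 0) j) x := by
            nth_rewrite 1 [← one_mul (∑' j, _)]
            exact mul_le_mul_left one_le_two _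
  · push_neg at hbig
    have hΛle : ∀ j, Λ j ≤ 1 := hbig
    have hΛfin : ∀ j, Λ j ≠ ∞ := fun j => (lt_of_le_of_lt (hΛle j) ENNReal.one_lt_top).ne
    classical
    have hexN : ∃ N, 1 < ∑ j ∈ Finset.range N, Λ j := by
      rw [ENNReal.tsum_eq_iSup_sum] at hΛtsum
      obtain ⟨s, hs⟩ := lt_iSup_iff.mp hΛtsum
      refine ⟨s.sup id + 1, lt_of_lt_of_le hs (Finset.sum_le_sum_of_subset fun j hj => ?_)⟩
      exact Finset.mem_range.mpr (Nat.lt_succ_of_le (Finset.le_sup (f := id) hj))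
    set N := Nat.find hexN with hN_def
    have hPN : 1 < ∑ j ∈ Finset.range N, Λ j := Nat.find_spec hexN
    have hN0 : N ≠ 0 := by
      intro h0
      rw [h0] at hPN
      simp at hPN
    have hprev : ¬ 1 < ∑ j ∈ Finset.range (N - 1), Λ j :=
      Nat.find_min hexN (Nat.pred_lt hN0)
    have hsum2 : ∑ j ∈ Finset.range N, Λ j ≤ 2 := by
      have hNeq : N = (N - 1) + 1 := (Nat.succ_pred_eq_of_pos (Nat.pos_of_ne_zero hN0)).symm
      rw [hNeq, Finset.sum_range_succ]
      calc ∑ j ∈ Finset.range (N-1), Λ j + Λ (N-1) ≤ 1 + 1 :=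
            add_le_add (not_lt.mp hprev) (hΛle _)
      _ = 2 := one_add_one_eq_two
    set l : ℕ → ℝ≥0∞ := fun j => Λ j / 2 with hl_def
    have hlfin : ∀ j, l j ≠ ∞ := fun j => (ENNReal.div_lt_top (hΛfin j) (by norm_num)).ne
    have hex : ∀ j, j < N ∧ Λ j ≠ 0 → ∃ G : En n → ℝ, Measurable G ∧ (∀ x, 0 ≤ G x) ∧
        rhoP p' (nnAbs G) ≤ 1 ∧ 1 ≤ ∫⁻ x, (H j x / (l j) ^ θ x) * nnAbs G x := by
      rintro j ⟨hjN, hj0⟩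
      have hl0 : 0 < l j := ENNReal.div_pos hj0 (by norm_num)
      have hllt : l j < Λ j := ENNReal.half_lt_self hj0 (hΛfin j)
      have hrho : 1 < rhoP p (fun x => H j x / (l j) ^ θ x) := by
        by_contra hc
        push_neg at hc
        exact absurd (sInf_le ⟨hl0, hc⟩ : Λ j ≤ l j) (not_le.mpr hllt)
      have hmeas : Measurable (fun x => H j x / (l j) ^ θ x) :=
        (hHm j).div (measurable_const.pow hθmeas)
      exact lemA hpm hp1 hpc hmeas
        (fun x => (ENNReal.div_lt_top (hHfin j x)
          (ENNReal.rpow_pos hl0 (hlfin j)).ne').ne) hrho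
    choose Gch hG1 hG2 hG3 hG4 using hex
    set g : ℕ → En n → ℝ := fun j x =>
      if hj : j < N ∧ Λ j ≠ 0 then ((l j) ^ θ' x).toReal * Gch j hj x else 0 with hg_def
    have hu_facts : ∀ j, j < N ∧ Λ j ≠ 0 → ∀ x,
        (l j) ^ θ' x ≠ 0 ∧ (l j) ^ θ' x ≠ ∞ ∧ (l j) ^ θ x ≠ 0 ∧ (l j) ^ θ x ≠ ∞ := by
      rintro j ⟨hjN, hj0⟩ x
      have hl0 : 0 < l j := ENNReal.div_pos hj0 (by norm_num)
      exact ⟨(ENNReal.rpow_pos hl0 (hlfin j)).ne',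
        ENNReal.rpow_ne_top_of_nonneg (hθ'nn x) (hlfin j),
        (ENNReal.rpow_pos hl0 (hlfin j)).ne',
        ENNReal.rpow_ne_top_of_nonneg (hθnn x) (hlfin j)⟩
    have hgval : ∀ j (hj : j < N ∧ Λ j ≠ 0) (x : En n),
        nnAbs (g j) x = (l j) ^ θ' x * nnAbs (Gch j hj) x := by
      intro j hj x
      rw [hg_def]
      unfold nnAbs
      simp only [dif_pos hj]
      rw [abs_mul, abs_of_nonneg ENNReal.toReal_nonneg,
        ENNReal.ofReal_mul ENNReal.toReal_nonneg,
        ENNReal.ofReal_toReal (hu_facts j hj x).2.1]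
    have hgzero : ∀ j, ¬(j < N ∧ Λ j ≠ 0) → nnAbs (g j) = fun _ => 0 := by
      intro j hj
      funext x
      rw [hg_def]
      unfold nnAbs
      simp only [dif_neg hj]
      simp
    refine ⟨g, ?_, ?_, ?_⟩
    · intro j
      by_cases hj : j < N ∧ Λ j ≠ 0
      · have : g j = fun x => ((l j) ^ θ' x).toReal * Gch j hj x := by
          funext x; rw [hg_def]; simp only [dif_pos hj]
        rw [this]
        exact ((measurable_const.pow hθ'meas).ennreal_toReal).mul (hG1 j hj)
      · have : g j = fun _ => 0 := by
          funext x; rw [hg_def]; simp only [dif_neg hj]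
        rw [this]
        exact measurable_const
    · refine mixedNorm_le_one ?_
      rw [mixedModular_eq]
      have hterm : ∀ j, lamInner p' θ' (nnAbs (g j)) ≤ (if j < N then l j else 0) := by
        intro j
        by_cases hj : j < N ∧ Λ j ≠ 0
        · rw [if_pos hj.1]
          have hl0 : 0 < l j := ENNReal.div_pos hj.2 (by norm_num)
          refine sInf_le ⟨hl0, ?_⟩
          have heq : (fun x => nnAbs (g j) x / (l j) ^ θ' x) = nnAbs (Gch j hj) := by
            funext x
            rw [hgval j hj x, mul_comm, mul_div_assoc,
              ENNReal.div_self (hu_facts j hj x).1 (hu_facts j hj x).2.1, mul_one]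
          rw [heq]
          exact hG3 j hj
        · rw [hgzero j hj, lamInner_zero hp'1]
          exact zero_le
      calc ∑' j, lamInner p' θ' (nnAbs (g j)) ≤ ∑' j, (if j < N then l j else 0) :=
            ENNReal.tsum_le_tsum hterm
      _ = ∑ j ∈ Finset.range N, l j := by
            rw [tsum_eq_sum (s := Finset.range N) ?_]
            · apply Finset.sum_congr rfl
              intro j hj
              rw [if_pos (Finset.mem_range.mp hj)]
            · intro j hj
              rw [if_neg (fun hlt => hj (Finset.mem_range.mpr hlt))]
      _ = (∑ j ∈ Finset.range N, Λ j) / 2 := by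
            rw [hl_def]
            simp_rw [div_eq_mul_inv, ← Finset.sum_mul]
      _ ≤ 2 / 2 := ENNReal.div_le_div_right hsum2 2
      _ = 1 := ENNReal.div_self (by norm_num) (by norm_num)
    · -- the pairing estimate
      have hterm : ∀ j, j < N → m * l j ≤ ∫⁻ x, F j x * nnAbs (g j) x := by
        intro j hjN
        by_cases hj0 : Λ j = 0
        · have : l j = 0 := by rw [hl_def]; simp [hj0]
          rw [this, mul_zero]
          exact zero_le
        · have hj : j < N ∧ Λ j ≠ 0 := ⟨hjN, hj0⟩
          have hpoint : ∀ x, F j x * nnAbs (g j) x =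
              (m * l j) * ((H j x / (l j) ^ θ x) * nnAbs (Gch j hj) x) := by
            intro x
            obtain ⟨hv0, hvt, hu0, hut⟩ := hu_facts j hj x
            rw [hFH j x, hgval j hj x]
            have hHsplit : H j x * (l j) ^ θ' x = (H j x / (l j) ^ θ x) * l j := by
              calc H j x * (l j) ^ θ' x
                  = (H j x / (l j) ^ θ x) * (l j) ^ θ x * (l j) ^ θ' x := by
                    rw [ENNReal.div_mul_cancel hu0 hut]
              _ = (H j x / (l j) ^ θ x) * ((l j) ^ θ x * (l j) ^ θ' x) := by ring
              _ = (H j x / (l j) ^ θ x) * l j := by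
                    rw [← ENNReal.rpow_add _ _ (ENNReal.div_pos hj0 (by norm_num)).ne'
                      (hlfin j), hθsum x, ENNReal.rpow_one]
            calc m * H j x * ((l j) ^ θ' x * nnAbs (Gch j hj) x)
                = m * (H j x * (l j) ^ θ' x) * nnAbs (Gch j hj) x := by ring
            _ = m * ((H j x / (l j) ^ θ x) * l j) * nnAbs (Gch j hj) x := by
                  rw [hHsplit]
            _ = (m * l j) * ((H j x / (l j) ^ θ x) * nnAbs (Gch j hj) x) := by ring
          calc m * l j = (m * l j) * 1 := (mul_one _).symm
          _ ≤ (m * l j) * ∫⁻ x, (H j x / (l j) ^ θ x) * nnAbs (Gch j hj) x :=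
                mul_le_mul_right (hG4 j hj) _
          _ = ∫⁻ x, F j x * nnAbs (g j) x := by
                rw [← lintegral_const_mul' _ _ (ENNReal.mul_ne_top hmt (hlfin j))]
                exact (lintegral_congr hpoint).symm
      have hsum_ge : m * 2⁻¹ ≤ ∑' j, ∫⁻ x, F j x * nnAbs (g j) x := by
        calc m * 2⁻¹ = m * (1 / 2) := by rw [one_div]
        _ ≤ m * ((∑ j ∈ Finset.range N, Λ j) / 2) :=
              mul_le_mul_right (ENNReal.div_le_div_right hPN.le 2) _
        _ = m * (∑ j ∈ Finset.range N, l j) := by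
              rw [hl_def]
              simp_rw [div_eq_mul_inv, ← Finset.sum_mul]
        _ = ∑ j ∈ Finset.range N, m * l j := Finset.mul_sum _ _ _
        _ ≤ ∑ j ∈ Finset.range N, ∫⁻ x, F j x * nnAbs (g j) x := by
              refine Finset.sum_le_sum fun j hj => hterm j (Finset.mem_range.mp hj)
        _ ≤ ∑' j, ∫⁻ x, F j x * nnAbs (g j) x := ENNReal.sum_le_tsum _
      calc m = 2 * (m * 2⁻¹) := by
            rw [← mul_assoc, mul_comm (2:ℝ≥0∞) m, mul_assoc,
              ENNReal.mul_inv_cancel (by norm_num) (by norm_num), mul_one]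
      _ ≤ 2 * ∑' j, ∫⁻ x, F j x * nnAbs (g j) x := mul_le_mul_right hsum_ge _

end S6

open S6 in
theorem stmt6' {n : ℕ} (p q p' q' : En n → ℝ≥0∞)
    (hp : IsExponent p) (hq : IsExponent q) (hp' : Measurable p') (hq' : Measurable q')
    (hpc : ∀ x, (p x)⁻¹ + (p' x)⁻¹ = 1) (hqc : ∀ x, (q x)⁻¹ + (q' x)⁻¹ = 1) :
    ∃ c₁ c₂ : ℝ≥0∞, c₁ ≠ ∞ ∧ c₂ ≠ ∞ ∧ ∀ f : ℕ → En n → ℝ,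
      (∀ j, Measurable (f j)) → mixedNorm q p (fun j => nnAbs (f j)) ≠ ∞ →
      mixedNorm q p (fun j => nnAbs (f j)) ≤
          c₁ * (⨆ g ∈ {g : ℕ → En n → ℝ | (∀ j, Measurable (g j)) ∧
                  mixedNorm q' p' (fun j => nnAbs (g j)) ≤ 1},
                ∑' j, ∫⁻ x, nnAbs (f j) x * nnAbs (g j) x) ∧
      (⨆ g ∈ {g : ℕ → En n → ℝ | (∀ j, Measurable (g j)) ∧
                  mixedNorm q' p' (fun j => nnAbs (g j)) ≤ 1},
            ∑' j, ∫⁻ x, nnAbs (f j) x * nnAbs (g j) x) ≤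
          c₂ * mixedNorm q p (fun j => nnAbs (f j)) := by
  obtain ⟨hpm, hp1⟩ := hp
  obtain ⟨hqm, hq1⟩ := hq
  refine ⟨2, 8, by norm_num, by norm_num, ?_⟩
  intro f hfm hnorm
  have hFm : ∀ j, Measurable (nnAbs (f j)) := fun j => ((hfm j).abs).ennreal_ofReal
  have hFfin : ∀ (j : ℕ) (x : En n), nnAbs (f j) x ≠ ∞ := fun j x => ENNReal.ofReal_ne_top
  constructor
  · -- lower estimate
    by_contra hc
    push_neg at hc
    obtain ⟨m, hm1, hm2⟩ := exists_between hc
    have hm0 : m ≠ 0 := by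
      rintro rfl
      exact not_lt_bot hm1
    have hmt : m ≠ ∞ := (lt_of_lt_of_le hm2 le_top).ne
    have hmod : 1 < mixedModular q p (fun j x => nnAbs (f j) x / m) :=
      one_lt_modular_of_lt_norm (pos_iff_ne_zero.mpr hm0) hm2
    obtain ⟨g, hgm, hgn, hpair⟩ :=
      lower_bound hpm hp1 hqm hq' hpc hqc hFm hFfin hm0 hmt hmod
    have hle : (∑' j, ∫⁻ x, nnAbs (f j) x * nnAbs (g j) x) ≤
        ⨆ g ∈ {g : ℕ → En n → ℝ | (∀ j, Measurable (g j)) ∧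
            mixedNorm q' p' (fun j => nnAbs (g j)) ≤ 1},
          ∑' j, ∫⁻ x, nnAbs (f j) x * nnAbs (g j) x :=
      le_iSup₂_of_le g ⟨hgm, hgn⟩ le_rfl
    have : m ≤ 2 * ⨆ g ∈ {g : ℕ → En n → ℝ | (∀ j, Measurable (g j)) ∧
            mixedNorm q' p' (fun j => nnAbs (g j)) ≤ 1},
          ∑' j, ∫⁻ x, nnAbs (f j) x * nnAbs (g j) x :=
      hpair.trans (mul_le_mul_right hle 2)
    exact absurd this (not_le.mpr hm1)
  · -- upper estimate
    refine iSup₂_le fun g hg => ?_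
    obtain ⟨hgm, hgn⟩ := hg
    have hGm : ∀ j, Measurable (nnAbs (g j)) := fun j => ((hgm j).abs).ennreal_ofReal
    have key : ∀ m, mixedNorm q p (fun j => nnAbs (f j)) < m →
        (∑' j, ∫⁻ x, nnAbs (f j) x * nnAbs (g j) x) ≤ 8 * m := by
      intro m hm
      by_cases hmt : m = ∞
      · rw [hmt]
        simp only [ENNReal.mul_top (by norm_num : (8:ℝ≥0∞) ≠ 0)]
        exact le_top
      have hm0 : m ≠ 0 := ((zero_le).trans_lt hm).ne'
      have hmodF := modular_le_one_of_norm_lt hm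
      have hmodG : mixedModular q' p' (fun j x => nnAbs (g j) x / 2) ≤ 1 :=
        modular_le_one_of_norm_lt (lt_of_le_of_lt hgn one_lt_two)
      have hpl := pairing_le hpm hqm hp1 hpc hqc
        (F := fun j x => nnAbs (f j) x / m) (G := fun j x => nnAbs (g j) x / 2)
        (fun j => (hFm j).div measurable_const) hmodF hmodG
      have hYeq : (∑' j, ∫⁻ x, nnAbs (f j) x * nnAbs (g j) x) =
          (m * 2) * ∑' j, ∫⁻ x, (nnAbs (f j) x / m) * (nnAbs (g j) x / 2) := by
        rw [← ENNReal.tsum_mul_left]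
        congr 1
        funext j
        rw [← lintegral_const_mul' _ _ (ENNReal.mul_ne_top hmt (by norm_num))]
        apply lintegral_congr
        intro x
        calc nnAbs (f j) x * nnAbs (g j) x
            = (m * (nnAbs (f j) x / m)) * (2 * (nnAbs (g j) x / 2)) := by
              rw [ENNReal.mul_div_cancel hm0 hmt,
                ENNReal.mul_div_cancel' (by norm_num) (by norm_num)]
        _ = (m * 2) * ((nnAbs (f j) x / m) * (nnAbs (g j) x / 2)) := by ring
      calc (∑' j, ∫⁻ x, nnAbs (f j) x * nnAbs (g j) x)
          = (m * 2) * ∑' j, ∫⁻ x, (nnAbs (f j) x / m) * (nnAbs (g j) x / 2) := hYeq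
      _ ≤ (m * 2) * 4 := mul_le_mul_right hpl _
      _ = 8 * m := by ring
    have hdiv : (∑' j, ∫⁻ x, nnAbs (f j) x * nnAbs (g j) x) / 8 ≤
        mixedNorm q p (fun j => nnAbs (f j)) := by
      refine le_of_forall_gt' fun m hm => ?_
      rw [ENNReal.div_le_iff_le_mul (Or.inl (by norm_num)) (Or.inl (by norm_num))]
      rw [mul_comm]
      exact key m hm
    rw [ENNReal.div_le_iff_le_mul (Or.inl (by norm_num)) (Or.inl (by norm_num))] at hdiv
    rwa [mul_comm] at hdiv

end

/-- the norm conjugate (duality) formula for `ℓ^{q(·)}(L^{p(·)})`. -/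
theorem stmt6 {n : ℕ} (p q p' q' : En n → ℝ≥0∞)
    (hp : IsExponent p) (hq : IsExponent q) (hp' : Measurable p') (hq' : Measurable q')
    (hpc : ∀ x, (p x)⁻¹ + (p' x)⁻¹ = 1) (hqc : ∀ x, (q x)⁻¹ + (q' x)⁻¹ = 1) :
    ∃ c₁ c₂ : ℝ≥0∞, c₁ ≠ ∞ ∧ c₂ ≠ ∞ ∧ ∀ f : ℕ → En n → ℝ,
      (∀ j, Measurable (f j)) → mixedNorm q p (fun j => nnAbs (f j)) ≠ ∞ →
      mixedNorm q p (fun j => nnAbs (f j)) ≤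
          c₁ * (⨆ g ∈ {g : ℕ → En n → ℝ | (∀ j, Measurable (g j)) ∧
                  mixedNorm q' p' (fun j => nnAbs (g j)) ≤ 1},
                ∑' j, ∫⁻ x, nnAbs (f j) x * nnAbs (g j) x) ∧
      (⨆ g ∈ {g : ℕ → En n → ℝ | (∀ j, Measurable (g j)) ∧
                  mixedNorm q' p' (fun j => nnAbs (g j)) ≤ 1},
            ∑' j, ∫⁻ x, nnAbs (f j) x * nnAbs (g j) x) ≤
          c₂ * mixedNorm q p (fun j => nnAbs (f j)) :=
  stmt6' p q p' q' hp hq hp' hq' hpc hqc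
end

section
/- Let p, q, s : ℝⁿ → [1,∞] be measurable with 1/s = 1/p + 1/q pointwise. Then ‖fg‖_{s(·)} ≲ ‖f‖_{p(·)} ‖g‖_{q(·)} for all f ∈ L^{p(·)} and g ∈ L^{q(·)}. -/
open MeasureTheory ENNReal Filter
open scoped SchwartzMap FourierTransform

section HolderAux

open MeasureTheory

lemma omegaP_toReal_ge {P : ℝ≥0∞} (hP : 1 ≤ P) (hPt : P ≠ ∞) : 1 ≤ P.toReal := by
  have := ENNReal.toReal_mono hPt hP
  simpa using this

lemma omegaP_zero {P : ℝ≥0∞} (hP : 1 ≤ P) : omegaP P 0 = 0 := by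
  unfold omegaP
  split_ifs with h1 h2
  · rfl
  · exact absurd zero_le_one h2
  · refine ENNReal.zero_rpow_of_pos ?_
    have := omegaP_toReal_ge hP h1
    linarith

lemma le_omegaP {P t : ℝ≥0∞} (hP : 1 ≤ P) (ht : 1 < t) : t ≤ omegaP P t := by
  unfold omegaP
  split_ifs with h1 h2
  · exact absurd h2 (not_le.mpr ht)
  · exact le_top
  · exact ENNReal.le_rpow_self_of_one_le ht.le (omegaP_toReal_ge hP h1)

lemma omegaP_young {P Q S a b : ℝ≥0∞} (hP : 1 ≤ P) (hQ : 1 ≤ Q) (hS : 1 ≤ S)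
    (h : S⁻¹ = P⁻¹ + Q⁻¹) : omegaP S (a * b) ≤ omegaP P a + omegaP Q b := by
  by_cases hSt : S = ∞
  · have hsum : P⁻¹ + Q⁻¹ = 0 := by rw [← h, hSt, ENNReal.inv_top]
    have hPt : P = ∞ := by
      have := (add_eq_zero.mp hsum).1; rwa [ENNReal.inv_eq_zero] at this
    have hQt : Q = ∞ := by
      have := (add_eq_zero.mp hsum).2; rwa [ENNReal.inv_eq_zero] at this
    simp only [omegaP, hSt, hPt, hQt, if_true]
    by_cases ha : a ≤ 1
    · by_cases hb : b ≤ 1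
      · simp [ha, hb, mul_le_one' ha hb]
      · simp [hb]
    · simp [ha]
  · have hSr : 1 ≤ S.toReal := omegaP_toReal_ge hS hSt
    have hSr0 : (0:ℝ) < S.toReal := lt_of_lt_of_le one_pos hSr
    by_cases hPt : P = ∞
    · have hQt : Q ≠ ∞ := by
        intro hQt
        apply hSt
        have h2 : S⁻¹ = 0 := by rw [h, hPt, hQt, ENNReal.inv_top, zero_add]
        rwa [ENNReal.inv_eq_zero] at h2
      have hSQ : S = Q := by
        have h2 : S⁻¹ = Q⁻¹ := by rw [h, hPt, ENNReal.inv_top, zero_add]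
        rw [← inv_inv S, h2, inv_inv]
      by_cases ha : a ≤ 1
      · have h1 : omegaP S (a * b) ≤ omegaP Q b := by
          rw [← hSQ]
          unfold omegaP
          rw [if_neg hSt, if_neg hSt]
          exact ENNReal.rpow_le_rpow (by
            calc a * b ≤ 1 * b := mul_le_mul_left ha b
            _ = b := one_mul b) hSr0.le
        exact h1.trans le_add_self
      · have hPa : omegaP P a = ∞ := by unfold omegaP; simp [hPt, ha]
        rw [hPa]
        exact le_top.trans (by simp)
    · by_cases hQt : Q = ∞
      · have hSP : S = P := by
          have h2 : S⁻¹ = P⁻¹ := by rw [h, hQt, ENNReal.inv_top, add_zero]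
          rw [← inv_inv S, h2, inv_inv]
        by_cases hb : b ≤ 1
        · have h1 : omegaP S (a * b) ≤ omegaP P a := by
            rw [← hSP]
            unfold omegaP
            rw [if_neg hSt, if_neg hSt]
            exact ENNReal.rpow_le_rpow (by
              calc a * b ≤ a * 1 := mul_le_mul_right hb a
              _ = a := mul_one a) hSr0.le
          exact h1.trans le_self_add
        · have hQb : omegaP Q b = ∞ := by unfold omegaP; simp [hQt, hb]
          rw [hQb]
          exact le_top.trans (by simp)
      · have hPr : 1 ≤ P.toReal := omegaP_toReal_ge hP hPt
        have hQr : 1 ≤ Q.toReal := omegaP_toReal_ge hQ hQt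
        have hPr0 : (0:ℝ) < P.toReal := lt_of_lt_of_le one_pos hPr
        have hQr0 : (0:ℝ) < Q.toReal := lt_of_lt_of_le one_pos hQr
        have hP0 : P ≠ 0 := (lt_of_lt_of_le zero_lt_one hP).ne'
        have hQ0 : Q ≠ 0 := (lt_of_lt_of_le zero_lt_one hQ).ne'
        have hrel : S.toReal⁻¹ = P.toReal⁻¹ + Q.toReal⁻¹ := by
          have h1 : (S⁻¹).toReal = (P⁻¹).toReal + (Q⁻¹).toReal := by
            rw [h, ENNReal.toReal_add (by simp [hP0]) (by simp [hQ0])]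
          simpa [ENNReal.toReal_inv] using h1
        set sr := S.toReal
        set pr := P.toReal
        set qr := Q.toReal
        have hsp : sr < pr := by
          have h1 : pr⁻¹ < sr⁻¹ := by
            rw [hrel]
            exact lt_add_of_pos_right _ (inv_pos.mpr hQr0)
          by_contra hle
          push_neg at hle
          exact absurd h1 (not_lt.mpr (by gcongr))
        have hsq : sr < qr := by
          have h1 : qr⁻¹ < sr⁻¹ := by
            rw [hrel]
            exact lt_add_of_pos_left _ (inv_pos.mpr hPr0)
          by_contra hle
          push_neg at hle
          exact absurd h1 (not_lt.mpr (by gcongr))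
        have hconj : (pr / sr).HolderConjugate (qr / sr) := by
          rw [Real.holderConjugate_iff]
          constructor
          · exact (one_lt_div hSr0).mpr hsp
          · rw [inv_div, inv_div]
            have h2 := hrel
            field_simp at h2 ⊢
            linarith
        have key := ENNReal.young_inequality (a ^ sr) (b ^ sr) hconj
        unfold omegaP
        rw [if_neg hSt, if_neg hPt, if_neg hQt]
        have hd1 : (a ^ sr) ^ (pr / sr) / ENNReal.ofReal (pr / sr) ≤ (a ^ sr) ^ (pr / sr) := by
          rw [ENNReal.div_eq_inv_mul]
          calc (ENNReal.ofReal (pr / sr))⁻¹ * (a ^ sr) ^ (pr / sr)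
              ≤ 1 * (a ^ sr) ^ (pr / sr) := by
                refine mul_le_mul_left (ENNReal.inv_le_one.mpr ?_) _
                exact ENNReal.one_le_ofReal.mpr ((one_le_div hSr0).mpr hsp.le)
            _ = (a ^ sr) ^ (pr / sr) := one_mul _
        have hd2 : (b ^ sr) ^ (qr / sr) / ENNReal.ofReal (qr / sr) ≤ (b ^ sr) ^ (qr / sr) := by
          rw [ENNReal.div_eq_inv_mul]
          calc (ENNReal.ofReal (qr / sr))⁻¹ * (b ^ sr) ^ (qr / sr)
              ≤ 1 * (b ^ sr) ^ (qr / sr) := by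
                refine mul_le_mul_left (ENNReal.inv_le_one.mpr ?_) _
                exact ENNReal.one_le_ofReal.mpr ((one_le_div hSr0).mpr hsq.le)
            _ = (b ^ sr) ^ (qr / sr) := one_mul _
        calc (a * b) ^ sr = a ^ sr * b ^ sr := ENNReal.mul_rpow_of_nonneg _ _ hSr0.le
          _ ≤ (a ^ sr) ^ (pr / sr) / ENNReal.ofReal (pr / sr)
              + (b ^ sr) ^ (qr / sr) / ENNReal.ofReal (qr / sr) := key
          _ ≤ (a ^ sr) ^ (pr / sr) + (b ^ sr) ^ (qr / sr) := add_le_add hd1 hd2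
          _ = a ^ pr + b ^ qr := by
              rw [← ENNReal.rpow_mul, ← ENNReal.rpow_mul]
              congr 1 <;> congr 1 <;> field_simp

lemma omegaP_half {S t : ℝ≥0∞} (hS : 1 ≤ S) : omegaP S (t / 2) ≤ omegaP S t / 2 := by
  by_cases h1 : S = ∞
  · simp only [omegaP, h1, if_true]
    by_cases ht : t ≤ 1
    · have h2 : t / 2 ≤ 1 := ENNReal.half_le_self.trans ht
      simp [h2, ht]
    · rw [if_neg ht, ENNReal.top_div_of_lt_top (by norm_num)]
      exact le_top
  · have hSr : 1 ≤ S.toReal := omegaP_toReal_ge hS h1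
    simp only [omegaP, if_neg h1]
    rw [ENNReal.div_rpow_of_nonneg _ _ (by linarith)]
    refine ENNReal.div_le_div_left ?_ _
    calc (2:ℝ≥0∞) = 2 ^ (1:ℝ) := (ENNReal.rpow_one 2).symm
      _ ≤ 2 ^ S.toReal := ENNReal.rpow_le_rpow_of_exponent_le (by norm_num) hSr

lemma omegaP_measurable {n : ℕ} {p : En n → ℝ≥0∞} {F : En n → ℝ≥0∞}
    (hp : Measurable p) (hF : Measurable F) :
    Measurable (fun x => omegaP (p x) (F x)) := by
  unfold omegaP
  refine Measurable.ite (hp (measurableSet_singleton ∞)) ?_ ?_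
  · exact Measurable.ite (measurableSet_le hF measurable_const)
      measurable_const measurable_const
  · exact hF.pow hp.ennreal_toReal

lemma nnAbs_measurable {n : ℕ} {f : En n → ℝ} (hf : Measurable f) :
    Measurable (nnAbs f) := by
  unfold nnAbs
  exact (continuous_abs.measurable.comp hf).ennreal_ofReal

lemma luxNorm_eq_zero_ae {n : ℕ} {p : En n → ℝ≥0∞} {F : En n → ℝ≥0∞}
    (hp : IsExponent p) (hF : Measurable F) (h0 : luxNorm p F = 0) :
    ∀ᵐ x : En n, F x = 0 := by
  have key : ∀ c : ℝ≥0∞, 0 < c → c ≠ ∞ → volume {x : En n | c < F x} = 0 := by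
    intro c hc hctop
    have hset : MeasurableSet {x : En n | c < F x} := measurableSet_lt measurable_const hF
    refine le_antisymm ?_ zero_le
    refine ENNReal.le_of_forall_pos_le_add fun ε hε _ => ?_
    rw [zero_add]
    have hεc : (0:ℝ≥0∞) < (ε : ℝ≥0∞) * c :=
      ENNReal.mul_pos (by exact_mod_cast hε.ne') hc.ne'
    have hδ : (0:ℝ≥0∞) < min c ((ε : ℝ≥0∞) * c) := lt_min hc hεc
    have hlt : luxNorm p F < min c ((ε : ℝ≥0∞) * c) := h0 ▸ hδ
    obtain ⟨l, ⟨hl0, hρ⟩, hlδ⟩ := sInf_lt_iff.mp hlt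
    have hlc : l < c := hlδ.trans_le (min_le_left _ _)
    have hltop : l ≠ ∞ := (hlc.trans_le le_top).ne
    have hcl : 1 < c / l := by
      rw [ENNReal.lt_div_iff_mul_lt (Or.inl hl0.ne') (Or.inl hltop), one_mul]
      exact hlc
    have hpt : ∀ x ∈ {x : En n | c < F x}, c / l ≤ omegaP (p x) (F x / l) := by
      intro x hx
      have h1 : c / l ≤ F x / l := ENNReal.div_le_div_right (le_of_lt hx) l
      exact h1.trans (le_omegaP (hp.2 x) (lt_of_lt_of_le hcl h1))
    have hbound : c / l * volume {x : En n | c < F x} ≤ 1 := by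
      calc c / l * volume {x : En n | c < F x}
          = ∫⁻ _ in {x : En n | c < F x}, c / l := (setLIntegral_const _ _).symm
        _ ≤ ∫⁻ x in {x : En n | c < F x}, omegaP (p x) (F x / l) :=
            setLIntegral_mono' hset hpt
        _ ≤ ∫⁻ x, omegaP (p x) (F x / l) := setLIntegral_le_lintegral _ _
        _ ≤ 1 := hρ
    have hcl0 : c / l ≠ 0 := (lt_trans zero_lt_one hcl).ne'
    have hcltop : c / l ≠ ∞ := by
      rw [div_eq_mul_inv]
      exact ENNReal.mul_ne_top hctop (ENNReal.inv_ne_top.mpr hl0.ne')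
    have hvol : volume {x : En n | c < F x} ≤ (c / l)⁻¹ := by
      rw [← one_div]
      exact (ENNReal.le_div_iff_mul_le (Or.inl hcl0) (Or.inl hcltop)).mpr
        (by rwa [mul_comm] at hbound)
    refine hvol.trans ?_
    rw [ENNReal.inv_div (Or.inr hctop) (Or.inr hc.ne')]
    calc l / c ≤ (ε : ℝ≥0∞) * c / c :=
          ENNReal.div_le_div_right (hlδ.le.trans (min_le_right _ _)) c
      _ = (ε : ℝ≥0∞) := by
          rw [mul_div_assoc, ENNReal.div_self hc.ne' hctop, mul_one]
  have hsub : {x : En n | F x ≠ 0} ⊆ ⋃ k : ℕ, {x : En n | ((k : ℝ≥0∞) + 1)⁻¹ < F x} := by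
    intro x hx
    obtain ⟨k, hk⟩ := ENNReal.exists_inv_nat_lt hx
    refine Set.mem_iUnion.mpr ⟨k, ?_⟩
    exact lt_of_le_of_lt (ENNReal.inv_le_inv.mpr le_self_add) hk
  rw [MeasureTheory.ae_iff]
  refine measure_mono_null hsub (measure_iUnion_null fun k => key _ ?_ ?_)
  · exact ENNReal.inv_pos.mpr (by simp)
  · exact ENNReal.inv_ne_top.mpr (by simp)

lemma luxNorm_ae_zero {n : ℕ} {p : En n → ℝ≥0∞} {F : En n → ℝ≥0∞} (hp : IsExponent p)
    (h0 : ∀ᵐ x : En n, F x = 0) : luxNorm p F = 0 := by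
  refine le_antisymm ?_ zero_le
  refine ENNReal.le_of_forall_pos_le_add fun ε hε _ => ?_
  rw [zero_add]
  refine sInf_le ⟨by exact_mod_cast hε, ?_⟩
  have hρ : rhoP p (fun x => F x / (ε : ℝ≥0∞)) = 0 := by
    unfold rhoP
    calc ∫⁻ x, omegaP (p x) (F x / (ε : ℝ≥0∞))
        = ∫⁻ _ : En n, (0:ℝ≥0∞) := by
          refine lintegral_congr_ae (h0.mono fun x hx => ?_)
          simp only [hx, ENNReal.zero_div, omegaP_zero (hp.2 x)]
      _ = 0 := lintegral_zero
  rw [hρ]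
  exact zero_le_one

end HolderAux

/-- Hölder's inequality in variable exponent Lebesgue spaces. -/
theorem stmt8 {n : ℕ} (p q s : En n → ℝ≥0∞)
    (hp : IsExponent p) (hq : IsExponent q) (hs : IsExponent s)
    (h : ∀ x, (s x)⁻¹ = (p x)⁻¹ + (q x)⁻¹) :
    ∃ c : ℝ≥0∞, c ≠ ∞ ∧ ∀ f g : En n → ℝ, Measurable f → Measurable g →
      luxNorm s (nnAbs (fun x => f x * g x)) ≤ c * luxNorm p (nnAbs f) * luxNorm q (nnAbs g) := by
  refine ⟨2, by norm_num, ?_⟩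
  intro f g hf hg
  set F := nnAbs f with hFdef
  set G := nnAbs g with hGdef
  have hFm : Measurable F := nnAbs_measurable hf
  have hGm : Measurable G := nnAbs_measurable hg
  have hFG : nnAbs (fun x => f x * g x) = fun x => F x * G x := by
    funext x
    simp [hFdef, hGdef, nnAbs, abs_mul, ENNReal.ofReal_mul (abs_nonneg (f x))]
  rw [hFG]
  have key : ∀ l m : ℝ≥0∞,
      (0 < l ∧ rhoP p (fun x => F x / l) ≤ 1) →
      (0 < m ∧ rhoP q (fun x => G x / m) ≤ 1) →
      luxNorm s (fun x => F x * G x) ≤ 2 * l * m := by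
    rintro l m ⟨hl, hρl⟩ ⟨hm, hρm⟩
    have h2l : (2:ℝ≥0∞) * l ≠ 0 := (ENNReal.mul_pos (by norm_num) hl.ne').ne'
    have h2lm : (0:ℝ≥0∞) < 2 * l * m := ENNReal.mul_pos h2l hm.ne'
    refine sInf_le ⟨h2lm, ?_⟩
    by_cases hlt : l = ∞
    · have htop : 2 * l * m = ∞ := by
        rw [hlt, ENNReal.mul_top (by norm_num), ENNReal.top_mul hm.ne']
      unfold rhoP
      calc ∫⁻ x, omegaP (s x) (F x * G x / (2 * l * m))
          = ∫⁻ _ : En n, (0:ℝ≥0∞) := by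
            refine lintegral_congr fun x => ?_
            simp only [htop, ENNReal.div_top, omegaP_zero (hs.2 x)]
        _ ≤ 1 := by simp
    by_cases hmt : m = ∞
    · have htop : 2 * l * m = ∞ := by
        rw [hmt, ENNReal.mul_top h2l]
      unfold rhoP
      calc ∫⁻ x, omegaP (s x) (F x * G x / (2 * l * m))
          = ∫⁻ _ : En n, (0:ℝ≥0∞) := by
            refine lintegral_congr fun x => ?_
            simp only [htop, ENNReal.div_top, omegaP_zero (hs.2 x)]
        _ ≤ 1 := by simp
    · have hrw : ∀ x, F x * G x / (2 * l * m) = (F x / l) * (G x / m) / 2 := by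
        intro x
        rw [div_eq_mul_inv, div_eq_mul_inv, div_eq_mul_inv, div_eq_mul_inv]
        rw [ENNReal.mul_inv (Or.inl h2l) (Or.inr hm.ne'),
          ENNReal.mul_inv (Or.inl (by norm_num)) (Or.inr hl.ne')]
        ring
      calc rhoP s (fun x => F x * G x / (2 * l * m))
          = ∫⁻ x, omegaP (s x) ((F x / l) * (G x / m) / 2) := by
            unfold rhoP; exact lintegral_congr fun x => by simp only [hrw x]
        _ ≤ ∫⁻ x, omegaP (s x) ((F x / l) * (G x / m)) / 2 :=
            lintegral_mono fun x => omegaP_half (hs.2 x)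
        _ = (∫⁻ x, omegaP (s x) ((F x / l) * (G x / m))) / 2 := by
            simp_rw [div_eq_mul_inv, mul_comm _ (2:ℝ≥0∞)⁻¹]
            rw [lintegral_const_mul' _ _ (by norm_num)]
        _ ≤ (∫⁻ x, (omegaP (p x) (F x / l) + omegaP (q x) (G x / m))) / 2 := by
            refine ENNReal.div_le_div_right (lintegral_mono fun x => ?_) 2
            exact omegaP_young (hp.2 x) (hq.2 x) (hs.2 x) (h x)
        _ = (rhoP p (fun x => F x / l) + rhoP q (fun x => G x / m)) / 2 := by
            unfold rhoP
            rw [lintegral_add_left (omegaP_measurable hp.1 (hFm.div_const l))]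
        _ ≤ (1 + 1) / 2 := ENNReal.div_le_div_right (add_le_add hρl hρm) 2
        _ = 1 := by
            rw [one_add_one_eq_two, ENNReal.div_self (by norm_num) (by norm_num)]
  set Np := luxNorm p F with hNpdef
  set Nq := luxNorm q G with hNqdef
  by_cases hNp0 : Np = 0
  · have hF0 : ∀ᵐ x : En n, F x = 0 := luxNorm_eq_zero_ae hp hFm hNp0
    have hz : luxNorm s (fun x => F x * G x) = 0 :=
      luxNorm_ae_zero hs (hF0.mono fun x hx => by rw [hx, zero_mul])
    rw [hz]
    exact zero_le
  by_cases hNq0 : Nq = 0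
  · have hG0 : ∀ᵐ x : En n, G x = 0 := luxNorm_eq_zero_ae hq hGm hNq0
    have hz : luxNorm s (fun x => F x * G x) = 0 :=
      luxNorm_ae_zero hs (hG0.mono fun x hx => by rw [hx, mul_zero])
    rw [hz]
    exact zero_le
  by_cases hNpt : Np = ∞
  · have htop : 2 * Np * Nq = ∞ := by
      rw [hNpt, ENNReal.mul_top (by norm_num), ENNReal.top_mul hNq0]
    rw [htop]
    exact le_top
  by_cases hNqt : Nq = ∞
  · have htop : 2 * Np * Nq = ∞ := by
      rw [hNqt, ENNReal.mul_top (ENNReal.mul_pos (by norm_num) hNp0).ne']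
    rw [htop]
    exact le_top
  · have htend : Filter.Tendsto (fun ε : ℝ≥0∞ => 2 * (Np + ε) * (Nq + ε))
        (nhdsWithin 0 (Set.Ioi 0)) (nhds (2 * Np * Nq)) := by
      have h0 : Filter.Tendsto (fun ε : ℝ≥0∞ => ε) (nhdsWithin 0 (Set.Ioi 0)) (nhds 0) :=
        tendsto_id.mono_left nhdsWithin_le_nhds
      have h1 : Filter.Tendsto (fun ε : ℝ≥0∞ => Np + ε)
          (nhdsWithin 0 (Set.Ioi 0)) (nhds Np) := by
        simpa using h0.const_add Np
      have h2 : Filter.Tendsto (fun ε : ℝ≥0∞ => Nq + ε)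
          (nhdsWithin 0 (Set.Ioi 0)) (nhds Nq) := by
        simpa using h0.const_add Nq
      have h3 : Filter.Tendsto (fun ε : ℝ≥0∞ => 2 * (Np + ε))
          (nhdsWithin 0 (Set.Ioi 0)) (nhds (2 * Np)) :=
        ENNReal.Tendsto.const_mul h1 (Or.inl hNp0)
      exact ENNReal.Tendsto.mul h3 (Or.inr hNqt) h2
        (Or.inr (ENNReal.mul_ne_top (by norm_num) hNpt))
    refine ge_of_tendsto htend ?_
    filter_upwards [self_mem_nhdsWithin] with ε hε
    have hε0 : ε ≠ 0 := (Set.mem_Ioi.mp hε).ne'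
    have hlNp : Np < Np + ε := ENNReal.lt_add_right hNpt hε0
    have hlNq : Nq < Nq + ε := ENNReal.lt_add_right hNqt hε0
    obtain ⟨l, hlmem, hll⟩ := sInf_lt_iff.mp
      (show sInf {l : ℝ≥0∞ | 0 < l ∧ rhoP p (fun x => F x / l) ≤ 1} < Np + ε from hlNp)
    obtain ⟨m, hmmem, hmm⟩ := sInf_lt_iff.mp
      (show sInf {l : ℝ≥0∞ | 0 < l ∧ rhoP q (fun x => G x / l) ≤ 1} < Nq + ε from hlNq)
    calc luxNorm s (fun x => F x * G x) ≤ 2 * l * m := key l m hlmem hmmem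
      _ ≤ 2 * (Np + ε) * (Nq + ε) :=
        mul_le_mul' (mul_le_mul_right hll.le 2) hmm.le
end
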